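/- arXiv:1704.01987 — 7 statements merged into one kernel-verified Lean document; each statement's English description precedes it below -/
import Mathlib

section
/- (Lemma 2.6, non-strict case.) Let F be a symmetric bilinear form on V such that F(v,v) ≥ 0 for every v ∈ C0 (i.e. for every v with J(v) = 0). Then r+ := inf{ F(v,v)/J(v) : v ∈ V, J(v) > 0 } is greater than or equal to r− := sup{ F(u,u)/J(u) : u ∈ V, J(u) < 0 } (equivalently: for all u, v ∈ V with J(u) < 0 < J(v) one has F(u,u)/J(u) ≤ F(v,v)/J(v)), and for every real number r with r− ≤ r ≤ r+ one has F(v,v) ≥ r·J(v) for every v ∈ V. -/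
set_option maxHeartbeats 1000000 in
/-- Key inequality: for `B u u < 0 < B v v`, the ratios compare. -/
lemma key_ratio
    {V : Type*} [AddCommGroup V] [Module ℝ V]
    (B : V →ₗ[ℝ] V →ₗ[ℝ] ℝ)
    (hBsymm : ∀ v w : V, B v w = B w v)
    (F : V →ₗ[ℝ] V →ₗ[ℝ] ℝ)
    (hF0 : ∀ v : V, B v v = 0 → 0 ≤ F v v)
    {u v : V} (hc : B u u < 0) (ha : 0 < B v v) :
    F u u / B u u ≤ F v v / B v v := by
  set a := B v v with ha'
  set c := B u u with hc'
  set b := B v u with hb'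
  have expand : ∀ (G : V →ₗ[ℝ] V →ₗ[ℝ] ℝ) (t : ℝ),
      G (v + t • u) (v + t • u) = G v v + t * (G v u + G u v) + t ^ 2 * G u u := by
    intro G t
    simp [map_add, map_smul, smul_eq_mul]
    ring
  have hdisc : 0 < b ^ 2 - a * c := by
    nlinarith [sq_nonneg b, mul_pos ha (neg_pos.mpr hc)]
  set D := Real.sqrt (b ^ 2 - a * c) with hD'
  have hD2 : D ^ 2 = b ^ 2 - a * c := Real.sq_sqrt hdisc.le
  have hDpos : 0 < D := Real.sqrt_pos.mpr hdisc
  set t₁ := (-b + D) / c with ht1'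
  set t₂ := (-b - D) / c with ht2'
  have hcne : c ≠ 0 := ne_of_lt hc
  clear_value D t₁ t₂
  have h1 : c * t₁ = -b + D := by rw [ht1']; field_simp
  have h2 : c * t₂ = -b - D := by rw [ht2']; field_simp
  have hprod : t₁ * t₂ * c = a := by
    apply mul_left_cancel₀ hcne
    rw [show c * (t₁ * t₂ * c) = (c * t₁) * (c * t₂) by ring, h1, h2]
    linear_combination -hD2
  have hdiff : 0 < t₂ - t₁ := by
    have h3 : c * (t₂ - t₁) = -(2 * D) := by rw [mul_sub, h1, h2]; ring
    nlinarith
  have ht1t2 : t₁ * t₂ < 0 := by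
    have : t₁ * t₂ = a / c := by rw [eq_div_iff hcne]; exact hprod
    rw [this]
    exact div_neg_of_pos_of_neg ha hc
  have ht1neg : t₁ < 0 := by nlinarith
  have ht2pos : 0 < t₂ := by nlinarith
  have hroot : ∀ t : ℝ, t * t * c + t * (2 * b) + a = 0 → 0 ≤ F v v + t * (F v u + F u v) + t ^ 2 * F u u := by
    intro t ht
    have hBz : B (v + t • u) (v + t • u) = 0 := by
      rw [expand B t]
      have hsy : B v u + B u v = 2 * b := by rw [hBsymm u v]; ring
      rw [hsy]
      nlinarith [ht]
    have := hF0 _ hBz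
    rwa [expand F t] at this
  have hr1 : t₁ * t₁ * c + t₁ * (2 * b) + a = 0 := by
    apply mul_left_cancel₀ hcne
    rw [mul_zero, show c * (t₁ * t₁ * c + t₁ * (2 * b) + a) = (c * t₁) ^ 2 + 2 * b * (c * t₁) + a * c by ring, h1]
    linear_combination hD2
  have hr2 : t₂ * t₂ * c + t₂ * (2 * b) + a = 0 := by
    apply mul_left_cancel₀ hcne
    rw [mul_zero, show c * (t₂ * t₂ * c + t₂ * (2 * b) + a) = (c * t₂) ^ 2 + 2 * b * (c * t₂) + a * c by ring, h2]
    linear_combination hD2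
  have E1 := hroot t₁ hr1
  have E2 := hroot t₂ hr2
  set a' := F v v with ha2
  set c' := F u u with hc2
  set b' := F v u + F u v with hb2
  clear_value a' c' b'
  have h12 : (t₂ - t₁) * 0 ≤ (t₂ - t₁) * (a' - t₁ * t₂ * c') := by
    nlinarith [mul_nonneg ht2pos.le E1, mul_nonneg (neg_nonneg.mpr ht1neg.le) E2]
  have h3 : 0 ≤ a' - t₁ * t₂ * c' := le_of_mul_le_mul_left h12 hdiff
  have h4 : 0 ≤ -c * (a' - t₁ * t₂ * c') := mul_nonneg (neg_nonneg.mpr hc.le) h3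
  have h5 : -c * (a' - t₁ * t₂ * c') = -(c * a') + a * c' := by
    linear_combination c' * hprod
  have key : c * a' ≤ a * c' := by rw [h5] at h4; linarith
  rw [div_le_iff_of_neg hc, div_mul_eq_mul_div, div_le_iff₀ ha]
  linarith

/-- Lemma 2.6 (non-strict case): if the symmetric bilinear form `F` is non-negative
on the zero cone of the nondegenerate indefinite symmetric bilinear form `B`,
then `r₋ = sup_{J(u)<0} F(u,u)/J(u) ≤ r₊ = inf_{J(v)>0} F(v,v)/J(v)`, and for every
`r` with `r₋ ≤ r ≤ r₊` one has `F(v,v) ≥ r·J(v)` for all `v`. -/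
theorem stmt_0
    {V : Type*} [AddCommGroup V] [Module ℝ V] [FiniteDimensional ℝ V]
    (B : V →ₗ[ℝ] V →ₗ[ℝ] ℝ)
    (hBsymm : ∀ v w : V, B v w = B w v)
    (hBnd : ∀ v : V, (∀ w : V, B v w = 0) → v = 0)
    (hBindef : ∃ v w : V, 0 < B v v ∧ B w w < 0)
    (F : V →ₗ[ℝ] V →ₗ[ℝ] ℝ)
    (hFsymm : ∀ v w : V, F v w = F w v)
    (hF0 : ∀ v : V, B v v = 0 → 0 ≤ F v v) :
    sSup {x : ℝ | ∃ u : V, B u u < 0 ∧ x = F u u / B u u} ≤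
      sInf {x : ℝ | ∃ v : V, 0 < B v v ∧ x = F v v / B v v} ∧
    ∀ r : ℝ,
      sSup {x : ℝ | ∃ u : V, B u u < 0 ∧ x = F u u / B u u} ≤ r →
      r ≤ sInf {x : ℝ | ∃ v : V, 0 < B v v ∧ x = F v v / B v v} →
      ∀ v : V, r * B v v ≤ F v v := by
  obtain ⟨v₀, w₀, hv₀, hw₀⟩ := hBindef
  set Sneg := {x : ℝ | ∃ u : V, B u u < 0 ∧ x = F u u / B u u} with hSneg
  set Spos := {x : ℝ | ∃ v : V, 0 < B v v ∧ x = F v v / B v v} with hSpos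
  have hnegne : Sneg.Nonempty := ⟨_, w₀, hw₀, rfl⟩
  have hposne : Spos.Nonempty := ⟨_, v₀, hv₀, rfl⟩
  have hkey : ∀ x ∈ Sneg, ∀ y ∈ Spos, x ≤ y := by
    rintro x ⟨u, hu, rfl⟩ y ⟨w, hw, rfl⟩
    exact key_ratio B hBsymm F hF0 hu hw
  have hbddA : BddAbove Sneg := ⟨F v₀ v₀ / B v₀ v₀, fun x hx => hkey x hx _ ⟨v₀, hv₀, rfl⟩⟩
  have hbddB : BddBelow Spos := ⟨F w₀ w₀ / B w₀ w₀, fun y hy => hkey _ ⟨w₀, hw₀, rfl⟩ y hy⟩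
  have hmain : sSup Sneg ≤ sInf Spos := by
    apply csSup_le hnegne
    intro x hx
    exact le_csInf hposne (fun y hy => hkey x hx y hy)
  refine ⟨hmain, fun r hr1 hr2 v => ?_⟩
  rcases lt_trichotomy (B v v) 0 with h | h | h
  · have hmem : F v v / B v v ∈ Sneg := ⟨v, h, rfl⟩
    have : F v v / B v v ≤ r := le_trans (le_csSup hbddA hmem) hr1
    rw [div_le_iff_of_neg h] at this
    linarith
  · rw [h, mul_zero]
    exact hF0 v h
  · have hmem : F v v / B v v ∈ Spos := ⟨v, h, rfl⟩
    have : r ≤ F v v / B v v := le_trans hr2 (csInf_le hbddB hmem)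
    rw [le_div_iff₀ h] at this
    linarith
end

section
/- (Lemma 2.6, strict case.) Let F be a symmetric bilinear form on V such that F(v,v) > 0 for every nonzero v ∈ C0 (i.e. for every v ≠ 0 with J(v) = 0). Then r− := sup{ F(u,u)/J(u) : u ∈ V, J(u) < 0 } is strictly less than r+ := inf{ F(v,v)/J(v) : v ∈ V, J(v) > 0 }, and for every real number r with r− < r < r+ one has F(v,v) > r·J(v) for every nonzero v ∈ V. -/
open Filter Topology

private lemma quad_expand2 {V : Type*} [AddCommGroup V] [Module ℝ V]
    (G : V →ₗ[ℝ] V →ₗ[ℝ] ℝ) (u v : V) (s t : ℝ) :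
    G (s • u + t • v) (s • u + t • v) =
      s ^ 2 * G u u + s * t * (G u v + G v u) + t ^ 2 * G v v := by
  simp only [map_add, map_smul, LinearMap.add_apply, LinearMap.smul_apply, smul_eq_mul]
  ring

/-- Key pairwise inequality: for `B u u < 0 < B v v`,
`F u u / B u u < F v v / B v v`, provided `F` is positive on nonzero null vectors. -/
private lemma pair_lt {V : Type*} [AddCommGroup V] [Module ℝ V]
    (B F : V →ₗ[ℝ] V →ₗ[ℝ] ℝ)
    (hF0 : ∀ v : V, v ≠ 0 → B v v = 0 → 0 < F v v)
    {u v : V} (hu : B u u < 0) (hv : 0 < B v v) :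
    F u u / B u u < F v v / B v v := by
  have hccne : B v v ≠ 0 := ne_of_gt hv
  obtain ⟨m, hm⟩ : ∃ m : ℝ, m = (B u v + B v u) / 2 := ⟨_, rfl⟩
  have hac : 0 < m ^ 2 - B u u * B v v := by
    nlinarith [sq_nonneg m, mul_pos (neg_pos.2 hu) hv]
  obtain ⟨D, hD⟩ : ∃ D : ℝ, D = Real.sqrt (m ^ 2 - B u u * B v v) := ⟨_, rfl⟩
  have hD2 : D ^ 2 = m ^ 2 - B u u * B v v := by rw [hD]; exact Real.sq_sqrt hac.le
  have hDpos : 0 < D := by rw [hD]; exact Real.sqrt_pos.2 hac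
  obtain ⟨t₁, ht₁⟩ : ∃ t : ℝ, t = -m - D := ⟨_, rfl⟩
  obtain ⟨t₂, ht₂⟩ : ∃ t : ℝ, t = -m + D := ⟨_, rfl⟩
  have ht₁neg : t₁ < 0 := by
    rw [ht₁]; nlinarith [hD2, hDpos, hac, sq_nonneg (m + D), sq_nonneg (m - D)]
  have ht₂pos : 0 < t₂ := by
    rw [ht₂]; nlinarith [hD2, hDpos, hac, sq_nonneg (m + D), sq_nonneg (m - D)]
  have he1 : t₁ ^ 2 + 2 * m * t₁ + B u u * B v v = 0 := by
    rw [ht₁]; linear_combination hD2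
  have he2 : t₂ ^ 2 + 2 * m * t₂ + B u u * B v v = 0 := by
    rw [ht₂]; linear_combination hD2
  have hprod : t₁ * t₂ = B u u * B v v := by
    rw [ht₁, ht₂]; linear_combination -hD2
  -- the two null vectors  e(t) = (B v v) • u + t • v  for t = t₁, t₂
  have hBe : ∀ t : ℝ, t ^ 2 + 2 * m * t + B u u * B v v = 0 →
      B (B v v • u + t • v) (B v v • u + t • v) = 0 := by
    intro t ht
    rw [quad_expand2]
    linear_combination B v v * ht - 2 * B v v * t * hm
  have hne : ∀ t : ℝ, B v v • u + t • v ≠ 0 := by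
    intro t h
    have h1 : B v v • u = -(t • v) := eq_neg_of_add_eq_zero_left h
    have h2 : u = (B v v)⁻¹ • -(t • v) := by
      rw [← h1, inv_smul_smul₀ hccne]
    have h3 : B u u = ((B v v)⁻¹ * t) ^ 2 * B v v := by
      conv_lhs => rw [h2]
      simp only [map_smul, map_neg, LinearMap.smul_apply, LinearMap.neg_apply, smul_eq_mul]
      field_simp
    have h4 : 0 ≤ ((B v v)⁻¹ * t) ^ 2 * B v v := mul_nonneg (sq_nonneg _) hv.le
    linarith [h3.le, h3.ge, h4, hu]
  have hα := hF0 _ (hne t₁) (hBe t₁ he1)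
  have hβ := hF0 _ (hne t₂) (hBe t₂ he2)
  rw [quad_expand2] at hα hβ
  have hd : 0 < t₂ - t₁ := by linarith
  have h1 : 0 < t₂ * ((B v v) ^ 2 * F u u + B v v * t₁ * (F u v + F v u) + t₁ ^ 2 * F v v) +
      (-t₁) * ((B v v) ^ 2 * F u u + B v v * t₂ * (F u v + F v u) + t₂ ^ 2 * F v v) :=
    add_pos (mul_pos ht₂pos hα) (mul_pos (neg_pos.2 ht₁neg) hβ)
  have h2 : t₂ * ((B v v) ^ 2 * F u u + B v v * t₁ * (F u v + F v u) + t₁ ^ 2 * F v v) +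
      (-t₁) * ((B v v) ^ 2 * F u u + B v v * t₂ * (F u v + F v u) + t₂ ^ 2 * F v v) =
      (t₂ - t₁) * ((B v v) ^ 2 * F u u - t₁ * t₂ * F v v) := by ring
  rw [h2, hprod] at h1
  have hfinal : 0 < (B v v) ^ 2 * F u u - B u u * B v v * F v v := by nlinarith [h1, hd]
  rw [div_lt_iff_of_neg hu, div_mul_eq_mul_div, div_lt_iff₀ hv]
  nlinarith [hfinal, hv]

private lemma cont_quad (n : ℕ) (G : (Fin n → ℝ) →ₗ[ℝ] (Fin n → ℝ) →ₗ[ℝ] ℝ) :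
    Continuous fun v => G v v := by
  have h : ∀ v : Fin n → ℝ,
      G v v = ∑ i, v i * (G fun j => if i = j then (1:ℝ) else 0) v := by
    intro v
    conv_lhs => rw [LinearMap.pi_apply_eq_sum_univ G v]
    simp [LinearMap.sum_apply, LinearMap.smul_apply, smul_eq_mul]
  simp only [h]
  exact continuous_finset_sum _ fun i _ =>
    (continuous_apply i).mul (G _).continuous_of_finiteDimensional

private lemma attain_sup (n : ℕ) (B F : (Fin n → ℝ) →ₗ[ℝ] (Fin n → ℝ) →ₗ[ℝ] ℝ)
    (hF0 : ∀ w : Fin n → ℝ, w ≠ 0 → B w w = 0 → 0 < F w w)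
    (hne : {x : ℝ | ∃ u : Fin n → ℝ, B u u < 0 ∧ x = F u u / B u u}.Nonempty)
    (hbdd : BddAbove {x : ℝ | ∃ u : Fin n → ℝ, B u u < 0 ∧ x = F u u / B u u}) :
    ∃ u : Fin n → ℝ, B u u < 0 ∧
      F u u / B u u = sSup {x : ℝ | ∃ u : Fin n → ℝ, B u u < 0 ∧ x = F u u / B u u} := by
  set S := {x : ℝ | ∃ u : Fin n → ℝ, B u u < 0 ∧ x = F u u / B u u} with hS
  obtain ⟨x, hmono, hx, hxmem⟩ := exists_seq_tendsto_sSup hne hbdd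
  choose u hu hxu using hxmem
  have hu0 : ∀ k, u k ≠ 0 := by
    intro k h
    have := hu k
    rw [h] at this
    simp at this
  set w : ℕ → (Fin n → ℝ) := fun k => ‖u k‖⁻¹ • u k with hw
  have hnormne : ∀ k, (‖u k‖ : ℝ) ≠ 0 := fun k => norm_ne_zero_iff.2 (hu0 k)
  have hnormpos : ∀ k, (0:ℝ) < ‖u k‖⁻¹ := fun k => inv_pos.2 (norm_pos_iff.2 (hu0 k))
  have hwn : ∀ k, ‖w k‖ = 1 := by
    intro k
    rw [hw]
    simp [norm_smul, abs_of_nonneg (inv_nonneg.2 (norm_nonneg _)),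
      inv_mul_cancel₀ (hnormne k)]
  have hBw : ∀ k, B (w k) (w k) = (‖u k‖⁻¹) ^ 2 * B (u k) (u k) := by
    intro k
    simp only [hw, map_smul, LinearMap.smul_apply, smul_eq_mul]; ring
  have hFw : ∀ k, F (w k) (w k) = (‖u k‖⁻¹) ^ 2 * F (u k) (u k) := by
    intro k
    simp only [hw, map_smul, LinearMap.smul_apply, smul_eq_mul]; ring
  have hBwneg : ∀ k, B (w k) (w k) < 0 := by
    intro k
    rw [hBw]
    exact mul_neg_of_pos_of_neg (pow_pos (hnormpos k) 2) (hu k)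
  have hratio : ∀ k, F (w k) (w k) = x k * B (w k) (w k) := by
    intro k
    have hBne : B (u k) (u k) ≠ 0 := ne_of_lt (hu k)
    rw [hBw, hFw, hxu k]
    field_simp
  have hsph : IsCompact (Metric.sphere (0 : Fin n → ℝ) 1) := isCompact_sphere 0 1
  have hmem : ∀ k, w k ∈ Metric.sphere (0 : Fin n → ℝ) 1 := by
    intro k
    simp [Metric.mem_sphere, dist_zero_right, hwn k]
  obtain ⟨z, hz, ψ, hψ, hconv⟩ := hsph.tendsto_subseq hmem
  have hBc : Tendsto (fun k => B (w (ψ k)) (w (ψ k))) atTop (𝓝 (B z z)) :=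
    ((cont_quad n B).tendsto z).comp hconv
  have hFc : Tendsto (fun k => F (w (ψ k)) (w (ψ k))) atTop (𝓝 (F z z)) :=
    ((cont_quad n F).tendsto z).comp hconv
  have hBz_le : B z z ≤ 0 :=
    le_of_tendsto hBc (Filter.Eventually.of_forall fun k => (hBwneg (ψ k)).le)
  have hxψ : Tendsto (fun k => x (ψ k)) atTop (𝓝 (sSup S)) :=
    hx.comp hψ.tendsto_atTop
  have hFlim : Tendsto (fun k => F (w (ψ k)) (w (ψ k))) atTop (𝓝 (sSup S * B z z)) := by
    have := hxψ.mul hBc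
    simpa only [← hratio] using this
  have hFz : F z z = sSup S * B z z := tendsto_nhds_unique hFc hFlim
  have hz0 : z ≠ 0 := by
    intro h
    rw [h] at hz
    simp at hz
  have hBzlt : B z z < 0 := by
    rcases lt_or_eq_of_le hBz_le with h | h
    · exact h
    · exfalso
      have := hF0 z hz0 h
      rw [hFz, h, mul_zero] at this
      exact lt_irrefl 0 this
  refine ⟨z, hBzlt, ?_⟩
  rw [hFz, mul_div_assoc, div_self (ne_of_lt hBzlt), mul_one]

private lemma attain_inf (n : ℕ) (B F : (Fin n → ℝ) →ₗ[ℝ] (Fin n → ℝ) →ₗ[ℝ] ℝ)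
    (hF0 : ∀ w : Fin n → ℝ, w ≠ 0 → B w w = 0 → 0 < F w w)
    (hne : {x : ℝ | ∃ v : Fin n → ℝ, 0 < B v v ∧ x = F v v / B v v}.Nonempty)
    (hbdd : BddBelow {x : ℝ | ∃ v : Fin n → ℝ, 0 < B v v ∧ x = F v v / B v v}) :
    ∃ v : Fin n → ℝ, 0 < B v v ∧
      F v v / B v v = sInf {x : ℝ | ∃ v : Fin n → ℝ, 0 < B v v ∧ x = F v v / B v v} := by
  set S := {x : ℝ | ∃ v : Fin n → ℝ, 0 < B v v ∧ x = F v v / B v v} with hS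
  obtain ⟨x, hmono, hx, hxmem⟩ := exists_seq_tendsto_sInf hne hbdd
  choose u hu hxu using hxmem
  have hu0 : ∀ k, u k ≠ 0 := by
    intro k h
    have := hu k
    rw [h] at this
    simp at this
  set w : ℕ → (Fin n → ℝ) := fun k => ‖u k‖⁻¹ • u k with hw
  have hnormne : ∀ k, (‖u k‖ : ℝ) ≠ 0 := fun k => norm_ne_zero_iff.2 (hu0 k)
  have hnormpos : ∀ k, (0:ℝ) < ‖u k‖⁻¹ := fun k => inv_pos.2 (norm_pos_iff.2 (hu0 k))
  have hwn : ∀ k, ‖w k‖ = 1 := by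
    intro k
    rw [hw]
    simp [norm_smul, abs_of_nonneg (inv_nonneg.2 (norm_nonneg _)),
      inv_mul_cancel₀ (hnormne k)]
  have hBw : ∀ k, B (w k) (w k) = (‖u k‖⁻¹) ^ 2 * B (u k) (u k) := by
    intro k
    simp only [hw, map_smul, LinearMap.smul_apply, smul_eq_mul]; ring
  have hFw : ∀ k, F (w k) (w k) = (‖u k‖⁻¹) ^ 2 * F (u k) (u k) := by
    intro k
    simp only [hw, map_smul, LinearMap.smul_apply, smul_eq_mul]; ring
  have hBwpos : ∀ k, 0 < B (w k) (w k) := by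
    intro k
    rw [hBw]
    exact mul_pos (pow_pos (hnormpos k) 2) (hu k)
  have hratio : ∀ k, F (w k) (w k) = x k * B (w k) (w k) := by
    intro k
    have hBne : B (u k) (u k) ≠ 0 := ne_of_gt (hu k)
    rw [hBw, hFw, hxu k]
    field_simp
  have hsph : IsCompact (Metric.sphere (0 : Fin n → ℝ) 1) := isCompact_sphere 0 1
  have hmem : ∀ k, w k ∈ Metric.sphere (0 : Fin n → ℝ) 1 := by
    intro k
    simp [Metric.mem_sphere, dist_zero_right, hwn k]
  obtain ⟨z, hz, ψ, hψ, hconv⟩ := hsph.tendsto_subseq hmem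
  have hBc : Tendsto (fun k => B (w (ψ k)) (w (ψ k))) atTop (𝓝 (B z z)) :=
    ((cont_quad n B).tendsto z).comp hconv
  have hFc : Tendsto (fun k => F (w (ψ k)) (w (ψ k))) atTop (𝓝 (F z z)) :=
    ((cont_quad n F).tendsto z).comp hconv
  have hBz_le : 0 ≤ B z z :=
    ge_of_tendsto hBc (Filter.Eventually.of_forall fun k => (hBwpos (ψ k)).le)
  have hxψ : Tendsto (fun k => x (ψ k)) atTop (𝓝 (sInf S)) :=
    hx.comp hψ.tendsto_atTop
  have hFlim : Tendsto (fun k => F (w (ψ k)) (w (ψ k))) atTop (𝓝 (sInf S * B z z)) := by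
    have := hxψ.mul hBc
    simpa only [← hratio] using this
  have hFz : F z z = sInf S * B z z := tendsto_nhds_unique hFc hFlim
  have hz0 : z ≠ 0 := by
    intro h
    rw [h] at hz
    simp at hz
  have hBzlt : 0 < B z z := by
    rcases lt_or_eq_of_le hBz_le with h | h
    · exact h
    · exfalso
      have := hF0 z hz0 h.symm
      rw [hFz, ← h, mul_zero] at this
      exact lt_irrefl 0 this
  refine ⟨z, hBzlt, ?_⟩
  rw [hFz, mul_div_assoc, div_self (ne_of_gt hBzlt), mul_one]

/-- Lemma 2.6 (strict case): if the symmetric bilinear form `F` is positive on the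
nonzero vectors of the zero cone of the nondegenerate indefinite symmetric bilinear
form `B`, then `r₋ = sup_{J(u)<0} F(u,u)/J(u) < r₊ = inf_{J(v)>0} F(v,v)/J(v)`, and
for every `r` with `r₋ < r < r₊` one has `F(v,v) > r·J(v)` for all nonzero `v`. -/
theorem stmt_1
    {V : Type*} [AddCommGroup V] [Module ℝ V] [FiniteDimensional ℝ V]
    (B : V →ₗ[ℝ] V →ₗ[ℝ] ℝ)
    (hBsymm : ∀ v w : V, B v w = B w v)
    (hBnd : ∀ v : V, (∀ w : V, B v w = 0) → v = 0)
    (hBindef : ∃ v w : V, 0 < B v v ∧ B w w < 0)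
    (F : V →ₗ[ℝ] V →ₗ[ℝ] ℝ)
    (hFsymm : ∀ v w : V, F v w = F w v)
    (hF0 : ∀ v : V, v ≠ 0 → B v v = 0 → 0 < F v v) :
    sSup {x : ℝ | ∃ u : V, B u u < 0 ∧ x = F u u / B u u} <
      sInf {x : ℝ | ∃ v : V, 0 < B v v ∧ x = F v v / B v v} ∧
    ∀ r : ℝ,
      sSup {x : ℝ | ∃ u : V, B u u < 0 ∧ x = F u u / B u u} < r →
      r < sInf {x : ℝ | ∃ v : V, 0 < B v v ∧ x = F v v / B v v} →
      ∀ v : V, v ≠ 0 → r * B v v < F v v := by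
  obtain ⟨v₀, u₀, hv₀, hu₀⟩ := hBindef
  set Sneg := {x : ℝ | ∃ u : V, B u u < 0 ∧ x = F u u / B u u} with hSneg
  set Spos := {x : ℝ | ∃ v : V, 0 < B v v ∧ x = F v v / B v v} with hSpos
  have hneN : Sneg.Nonempty := ⟨F u₀ u₀ / B u₀ u₀, u₀, hu₀, rfl⟩
  have hneP : Spos.Nonempty := ⟨F v₀ v₀ / B v₀ v₀, v₀, hv₀, rfl⟩
  have hbddN : BddAbove Sneg := by
    refine ⟨F v₀ v₀ / B v₀ v₀, ?_⟩
    rintro x ⟨u, hu, rfl⟩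
    exact (pair_lt B F hF0 hu hv₀).le
  have hbddP : BddBelow Spos := by
    refine ⟨F u₀ u₀ / B u₀ u₀, ?_⟩
    rintro x ⟨v, hv, rfl⟩
    exact (pair_lt B F hF0 hu₀ hv).le
  -- transport to Fin n → ℝ
  set n := Module.finrank ℝ V with hn
  set L : (Fin n → ℝ) ≃ₗ[ℝ] V := (Module.finBasis ℝ V).equivFun.symm with hL
  set B' : (Fin n → ℝ) →ₗ[ℝ] (Fin n → ℝ) →ₗ[ℝ] ℝ :=
    B.compl₁₂ L.toLinearMap L.toLinearMap with hB'
  set F' : (Fin n → ℝ) →ₗ[ℝ] (Fin n → ℝ) →ₗ[ℝ] ℝ :=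
    F.compl₁₂ L.toLinearMap L.toLinearMap with hF'
  have hB'app : ∀ x y, B' x y = B (L x) (L y) := fun x y => rfl
  have hF'app : ∀ x y, F' x y = F (L x) (L y) := fun x y => rfl
  have hF0' : ∀ w : Fin n → ℝ, w ≠ 0 → B' w w = 0 → 0 < F' w w := by
    intro w hw h
    rw [hF'app]
    exact hF0 (L w) (fun h0 => hw (by simpa using congrArg L.symm h0)) (by rw [← hB'app]; exact h)
  have hsetN : Sneg = {x : ℝ | ∃ u : Fin n → ℝ, B' u u < 0 ∧ x = F' u u / B' u u} := by
    ext x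
    constructor
    · rintro ⟨u, hu, rfl⟩
      exact ⟨L.symm u, by simp [hB'app, hF'app, L.apply_symm_apply, hu]⟩
    · rintro ⟨u, hu, rfl⟩
      exact ⟨L u, by rw [hB'app] at hu; exact hu, by rw [hB'app, hF'app]⟩
  have hsetP : Spos = {x : ℝ | ∃ v : Fin n → ℝ, 0 < B' v v ∧ x = F' v v / B' v v} := by
    ext x
    constructor
    · rintro ⟨v, hv, rfl⟩
      exact ⟨L.symm v, by simp [hB'app, hF'app, L.apply_symm_apply, hv]⟩
    · rintro ⟨v, hv, rfl⟩
      exact ⟨L v, by rw [hB'app] at hv; exact hv, by rw [hB'app, hF'app]⟩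
  have hsup : ∃ u : V, B u u < 0 ∧ F u u / B u u = sSup Sneg := by
    rw [hsetN] at hneN hbddN ⊢
    obtain ⟨u, hu, hequ⟩ := attain_sup n B' F' hF0' hneN hbddN
    exact ⟨L u, by rw [← hB'app]; exact hu, by rw [← hB'app, ← hF'app]; exact hequ⟩
  have hinf : ∃ v : V, 0 < B v v ∧ F v v / B v v = sInf Spos := by
    rw [hsetP] at hneP hbddP ⊢
    obtain ⟨v, hv, heqv⟩ := attain_inf n B' F' hF0' hneP hbddP
    exact ⟨L v, by rw [← hB'app]; exact hv, by rw [← hB'app, ← hF'app]; exact heqv⟩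
  obtain ⟨u, hu, hequ⟩ := hsup
  obtain ⟨v, hv, heqv⟩ := hinf
  constructor
  · rw [← hequ, ← heqv]
    exact pair_lt B F hF0 hu hv
  · intro r hrN hrP w hw0
    rcases lt_trichotomy (B w w) 0 with h | h | h
    · have h1 : F w w / B w w ≤ sSup Sneg := le_csSup hbddN ⟨w, h, rfl⟩
      have h2 : F w w / B w w < r := lt_of_le_of_lt h1 hrN
      exact (div_lt_iff_of_neg h).1 h2
    · rw [h, mul_zero]
      exact hF0 w hw0 h
    · have h1 : sInf Spos ≤ F w w / B w w := csInf_le hbddP ⟨w, h, rfl⟩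
      have h2 : r < F w w / B w w := lt_of_lt_of_le hrP h1
      exact (lt_div_iff₀ h).1 h2
end

section
/- (Remark 2.7.) Let G be a symmetric bilinear form on V. If G(v,v) ≥ 0 for every v with B(v,v) = 0, then there exists a real number a such that G(v,v) ≥ a·B(v,v) for all v ∈ V. If moreover G(v,v) > 0 for every nonzero v with B(v,v) = 0, then there exists a real number a such that G(v,v) > a·B(v,v) for all nonzero v ∈ V. -/
set_option maxHeartbeats 1000000

theorem aux_bilin_bound
    {W : Type*} [AddCommGroup W] [Module ℝ W] [FiniteDimensional ℝ W]
    (H g : W →ₗ[ℝ] W →ₗ[ℝ] ℝ)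
    (hHsymm : ∀ x y, H x y = H y x)
    (hHpos : ∀ x : W, x ≠ 0 → 0 < H x x) :
    ∃ M : ℝ, 0 < M ∧ ∀ w : W, |g w w| ≤ M * H w w := by
  have hHnonneg : ∀ x : W, 0 ≤ H x x := by
    intro x
    rcases eq_or_ne x 0 with rfl | hx
    · simp
    · exact (hHpos x hx).le
  letI core : InnerProductSpace.Core ℝ W :=
    { inner := fun x y => H x y
      conj_inner_symm := fun x y => by simpa using hHsymm y x
      re_inner_nonneg := fun x => by simpa using hHnonneg x
      add_left := fun x y z => by simp
      smul_left := fun x y r => by simp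
      definite := fun x hx => by
        by_contra h
        exact (hHpos x h).ne' (by simpa using hx) }
  letI : NormedAddCommGroup W := core.toNormedAddCommGroup
  letI : InnerProductSpace ℝ W := InnerProductSpace.ofCore core.toCore
  have hinner : ∀ x y : W, (inner ℝ x y : ℝ) = H x y := fun x y => rfl
  have hnormsq : ∀ w : W, ‖w‖ ^ 2 = H w w := by
    intro w
    rw [← hinner w w]
    exact (real_inner_self_eq_norm_sq w).symm
  obtain ⟨n, b⟩ : ∃ n, Nonempty (OrthonormalBasis (Fin n) ℝ W) :=
    ⟨Module.finrank ℝ W, ⟨stdOrthonormalBasis ℝ W⟩⟩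
  obtain ⟨b⟩ := b
  set C : ℝ := ∑ i : Fin n, ∑ j : Fin n, |g (b i) (b j)| with hC
  have hCnonneg : 0 ≤ C := by
    apply Finset.sum_nonneg; intro i _
    apply Finset.sum_nonneg; intro j _
    exact abs_nonneg _
  refine ⟨C + 1, by positivity, fun w => ?_⟩
  set r : Fin n → ℝ := fun i => b.repr w i with hr
  have hre : ∀ i, r i = inner ℝ (b i) w := fun i => (b.repr_apply_apply w i)
  have hrbound : ∀ i, |r i| ≤ ‖w‖ := by
    intro i
    rw [hre]
    calc |(inner ℝ (b i) w : ℝ)| ≤ ‖b i‖ * ‖w‖ := abs_real_inner_le_norm _ _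
    _ = ‖w‖ := by rw [b.orthonormal.1 i]; ring
  have hexp : g w w = ∑ i : Fin n, ∑ j : Fin n, r i * r j * g (b i) (b j) := by
    conv_lhs => rw [← b.sum_repr w]
    simp only [map_sum, LinearMap.sum_apply, map_smul, LinearMap.smul_apply, smul_eq_mul,
      Finset.mul_sum]
    rw [Finset.sum_comm]
    apply Finset.sum_congr rfl; intro i _
    apply Finset.sum_congr rfl; intro j _
    show b.repr w j * (b.repr w i * g (b i) (b j)) = r i * r j * g (b i) (b j)
    rw [hr]; ring
  have key : |g w w| ≤ C * (H w w) := by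
    rw [hexp, hC, Finset.sum_mul]
    refine (Finset.abs_sum_le_sum_abs _ _).trans (Finset.sum_le_sum fun i _ => ?_)
    rw [Finset.sum_mul]
    refine (Finset.abs_sum_le_sum_abs _ _).trans (Finset.sum_le_sum fun j _ => ?_)
    have h1 : |r i * r j * g (b i) (b j)| = |r i| * |r j| * |g (b i) (b j)| := by
      rw [abs_mul, abs_mul]
    rw [h1]
    have h2 : |r i| * |r j| ≤ H w w := by
      calc |r i| * |r j| ≤ ‖w‖ * ‖w‖ :=
        mul_le_mul (hrbound i) (hrbound j) (abs_nonneg _) (norm_nonneg _)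
      _ = H w w := by rw [← sq]; exact hnormsq w
    calc |r i| * |r j| * |g (b i) (b j)| ≤ H w w * |g (b i) (b j)| :=
      mul_le_mul_of_nonneg_right h2 (abs_nonneg _)
    _ = |g (b i) (b j)| * H w w := by ring
  calc |g w w| ≤ C * H w w := key
  _ ≤ (C + 1) * H w w := by nlinarith [hHnonneg w]

theorem aux_roots (a b c : ℝ) (ha : 0 < a) (hc : c < 0) :
    ∃ t₁ t₂ : ℝ, c * t₁ ^ 2 + 2 * b * t₁ + a = 0 ∧ c * t₂ ^ 2 + 2 * b * t₂ + a = 0 ∧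
      t₁ * t₂ < 0 := by
  set D := b ^ 2 - a * c with hD
  have hDpos : 0 < D := by nlinarith
  have hs : Real.sqrt D ^ 2 = D := Real.sq_sqrt hDpos.le
  have hcne : c ≠ 0 := hc.ne
  refine ⟨(-b - Real.sqrt D) / c, (-b + Real.sqrt D) / c, ?_, ?_, ?_⟩
  · field_simp
    nlinarith [hs]
  · field_simp
    nlinarith [hs]
  · have h0 : (-b - Real.sqrt D) / c * ((-b + Real.sqrt D) / c) = (b ^ 2 - D) / c ^ 2 := by
      field_simp
      nlinarith [hs]
    rw [h0, hD]
    have h1 : b ^ 2 - (b ^ 2 - a * c) = a * c := by ring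
    rw [h1]
    apply div_neg_of_neg_of_pos
    · nlinarith
    · positivity

theorem aux_expand {V : Type*} [AddCommGroup V] [Module ℝ V]
    (Q : V →ₗ[ℝ] V →ₗ[ℝ] ℝ) (hQ : ∀ x y, Q x y = Q y x) (x y : V) (t : ℝ) :
    Q (x + t • y) (x + t • y) = Q y y * t ^ 2 + 2 * Q x y * t + Q x x := by
  simp only [map_add, LinearMap.add_apply, map_smul, LinearMap.smul_apply, smul_eq_mul]
  rw [hQ y x]
  ring

theorem aux_key {V : Type*} [AddCommGroup V] [Module ℝ V]
    (B G : V →ₗ[ℝ] V →ₗ[ℝ] ℝ)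
    (hBsymm : ∀ v w : V, B v w = B w v)
    (hGsymm : ∀ v w : V, G v w = G w v)
    (hG0 : ∀ u : V, B u u = 0 → 0 ≤ G u u)
    (v w : V) (hv : 0 < B v v) (hw : B w w < 0) :
    G v v * B w w ≤ G w w * B v v := by
  obtain ⟨t₁, t₂, hr₁, hr₂, hprod⟩ := aux_roots (B v v) (B v w) (B w w) hv hw
  set a := B v v; set b := B v w; set c := B w w
  set α := G v v; set β := G v w; set γ := G w w
  have hnull : ∀ t : ℝ, c * t ^ 2 + 2 * b * t + a = 0 → 0 ≤ γ * t ^ 2 + 2 * β * t + α := by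
    intro t ht
    have hB := aux_expand B hBsymm v w t
    have hG := aux_expand G hGsymm v w t
    have : B (v + t • w) (v + t • w) = 0 := by rw [hB]; linarith [ht]
    have := hG0 _ this
    rw [hG] at this
    linarith
  have hX₁ := hnull t₁ hr₁
  have hX₂ := hnull t₂ hr₂
  set K := α * c - γ * a with hK
  set L := 2 * (β * c - γ * b) with hL
  have e₁ : K + L * t₁ = c * (γ * t₁ ^ 2 + 2 * β * t₁ + α) - γ * (c * t₁ ^ 2 + 2 * b * t₁ + a) := by
    rw [hK, hL]; ring
  have e₂ : K + L * t₂ = c * (γ * t₂ ^ 2 + 2 * β * t₂ + α) - γ * (c * t₂ ^ 2 + 2 * b * t₂ + a) := by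
    rw [hK, hL]; ring
  have h₁ : K + L * t₁ ≤ 0 := by
    rw [e₁, hr₁]
    nlinarith [mul_nonneg (neg_nonneg.mpr hw.le) hX₁]
  have h₂ : K + L * t₂ ≤ 0 := by
    rw [e₂, hr₂]
    nlinarith [mul_nonneg (neg_nonneg.mpr hw.le) hX₂]
  -- goal : α * c ≤ γ * a, i.e. K ≤ 0
  by_contra hcon
  push_neg at hcon
  have hKpos : 0 < K := by rw [hK]; linarith
  have hl₁ : 0 < -(L * t₁) := by linarith
  have hl₂ : 0 < -(L * t₂) := by linarith
  nlinarith [mul_pos hl₁ hl₂, mul_nonneg (sq_nonneg L) (neg_nonneg.mpr hprod.le)]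

theorem aux_part1 {V : Type*} [AddCommGroup V] [Module ℝ V]
    (B G : V →ₗ[ℝ] V →ₗ[ℝ] ℝ)
    (hBsymm : ∀ v w : V, B v w = B w v)
    (hBindef : ∃ v w : V, 0 < B v v ∧ B w w < 0)
    (hGsymm : ∀ v w : V, G v w = G w v)
    (hG0 : ∀ v : V, B v v = 0 → 0 ≤ G v v) :
    ∃ a : ℝ, ∀ v : V, a * B v v ≤ G v v := by
  obtain ⟨v₀, w₀, hv₀, hw₀⟩ := hBindef
  set S : Set ℝ := {x | ∃ w : V, B w w < 0 ∧ x = G w w / B w w} with hS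
  have hSne : S.Nonempty := ⟨G w₀ w₀ / B w₀ w₀, w₀, hw₀, rfl⟩
  have hSbdd : ∀ v : V, 0 < B v v → ∀ x ∈ S, x ≤ G v v / B v v := by
    rintro v hv x ⟨w, hw, rfl⟩
    have hkey := aux_key B G hBsymm hGsymm hG0 v w hv hw
    rw [div_le_iff_of_neg hw, div_mul_eq_mul_div, div_le_iff₀ hv]
    linarith [hkey]
  have hbdd : BddAbove S := ⟨G v₀ v₀ / B v₀ v₀, fun x hx => hSbdd v₀ hv₀ x hx⟩
  refine ⟨sSup S, fun v => ?_⟩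
  rcases lt_trichotomy (B v v) 0 with hneg | hzero | hpos
  · have hmem : G v v / B v v ∈ S := ⟨v, hneg, rfl⟩
    have hle : G v v / B v v ≤ sSup S := le_csSup hbdd hmem
    have := mul_le_mul_of_nonpos_right hle hneg.le
    rwa [div_mul_cancel₀ _ hneg.ne] at this
  · rw [hzero, mul_zero]
    exact hG0 v hzero
  · have hle : sSup S ≤ G v v / B v v := csSup_le hSne (hSbdd v hpos)
    have := mul_le_mul_of_nonneg_right hle hpos.le
    rwa [div_mul_cancel₀ _ hpos.ne'] at this

theorem aux_expand' {V : Type*} [AddCommGroup V] [Module ℝ V]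
    (Q : V →ₗ[ℝ] V →ₗ[ℝ] ℝ) (hQ : ∀ x y, Q x y = Q y x) (x y : V) (t : ℝ) :
    Q (x + t • y) (x + t • y) = Q y y * t ^ 2 + 2 * Q x y * t + Q x x := by
  simp only [map_add, LinearMap.add_apply, map_smul, LinearMap.smul_apply, smul_eq_mul]
  rw [hQ y x]
  ring

theorem aux_psd_ker {V : Type*} [AddCommGroup V] [Module ℝ V]
    (H : V →ₗ[ℝ] V →ₗ[ℝ] ℝ)
    (hHsymm : ∀ x y, H x y = H y x)
    (hHpsd : ∀ x, 0 ≤ H x x) :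
    ∀ v : V, H v v = 0 → H v = 0 := by
  intro v hv
  ext w
  have key : ∀ t : ℝ, 0 ≤ H w w * t ^ 2 + 2 * H v w * t := by
    intro t
    have h := hHpsd (v + t • w)
    rw [aux_expand' H hHsymm v w t, hv] at h
    linarith
  set bb := H v w with hbb
  set cc := H w w with hcc
  have hccn : 0 ≤ cc := hHpsd w
  set s : ℝ := 1 / (cc + 1) with hs
  have hc1 : (0:ℝ) < cc + 1 := by linarith
  have hspos : 0 < s := by rw [hs]; positivity
  have hs1 : s * (cc + 1) = 1 := by rw [hs]; field_simp
  have ht := key (-bb * s)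
  have e : cc * (-bb * s) ^ 2 + 2 * bb * (-bb * s) = bb ^ 2 * s * (s * cc - 2) := by ring
  have hsc : s * cc = 1 - s := by linarith [hs1]
  have ht' : 0 ≤ bb ^ 2 * s * (-1 - s) := by
    have : H w w * (-bb * s) ^ 2 + 2 * H v w * (-bb * s) = bb ^ 2 * s * (-1 - s) := by
      rw [← hbb, ← hcc]
      calc cc * (-bb * s) ^ 2 + 2 * bb * (-bb * s) = bb ^ 2 * s * (s * cc - 2) := by ring
      _ = bb ^ 2 * s * (-1 - s) := by rw [hsc]; ring
    linarith [ht, this.symm.le, this.le]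
  have hb2 : bb ^ 2 ≤ 0 := by
    nlinarith [sq_nonneg bb, mul_nonneg (sq_nonneg bb) hspos.le,
      mul_nonneg (mul_nonneg (sq_nonneg bb) hspos.le) hspos.le]
  have : bb = 0 := by
    have := le_antisymm hb2 (sq_nonneg bb)
    exact pow_eq_zero_iff (n := 2) (by norm_num) |>.mp this
  simpa [hbb] using this

theorem aux_part2 {V : Type*} [AddCommGroup V] [Module ℝ V] [FiniteDimensional ℝ V]
    (B G : V →ₗ[ℝ] V →ₗ[ℝ] ℝ)
    (hBsymm : ∀ v w : V, B v w = B w v)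
    (hBindef : ∃ v w : V, 0 < B v v ∧ B w w < 0)
    (hGsymm : ∀ v w : V, G v w = G w v)
    (hG0 : ∀ v : V, B v v = 0 → 0 ≤ G v v)
    (hstrict : ∀ v : V, v ≠ 0 → B v v = 0 → 0 < G v v) :
    ∃ a : ℝ, ∀ v : V, v ≠ 0 → a * B v v < G v v := by
  obtain ⟨a₀, ha₀⟩ := aux_part1 B G hBsymm hBindef hGsymm hG0
  set H : V →ₗ[ℝ] V →ₗ[ℝ] ℝ := G - a₀ • B with hHdef
  have hHapp : ∀ x y : V, H x y = G x y - a₀ * B x y := by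
    intro x y
    simp [hHdef, LinearMap.sub_apply, LinearMap.smul_apply, smul_eq_mul]
  have hHsymm : ∀ x y : V, H x y = H y x := by
    intro x y
    rw [hHapp, hHapp, hBsymm x y, hGsymm x y]
  have hHpsd : ∀ x : V, 0 ≤ H x x := by
    intro x
    rw [hHapp]
    linarith [ha₀ x]
  have hker := aux_psd_ker H hHsymm hHpsd
  set N : Submodule ℝ V := LinearMap.ker H with hNdef
  have hmemN : ∀ x : V, x ∈ N ↔ H x = 0 := fun x => LinearMap.mem_ker
  have hN0 : ∀ x : V, x ∈ N → x ≠ 0 → B x x ≠ 0 := by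
    intro x hx hxne hBx
    have h1 : H x x = 0 := by rw [(hmemN x).1 hx]; simp
    have h2 : G x x = 0 := by
      have := hHapp x x
      rw [h1, hBx] at this
      linarith
    exact (hstrict x hxne hBx).ne' h2
  have hBrefl : LinearMap.IsRefl B := fun x y h => by rw [hBsymm y x]; exact h
  have hres : (LinearMap.BilinForm.restrict B N).Nondegenerate := by
    refine (LinearMap.IsRefl.nondegenerate_iff_separatingLeft (B := LinearMap.BilinForm.restrict B N) (fun x y h => hBrefl x y h)).2 ?_
    rintro ⟨x, hx⟩ h
    have hBxx : B x x = 0 := by simpa using h ⟨x, hx⟩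
    have hx0 : x = 0 := by
      by_contra hne
      exact hN0 x hx hne hBxx
    exact Subtype.ext hx0
  have hcompl : IsCompl N (LinearMap.BilinForm.orthogonal B N) :=
    LinearMap.BilinForm.isCompl_orthogonal_of_restrict_nondegenerate hBrefl hres
  set W : Submodule ℝ V := LinearMap.BilinForm.orthogonal B N with hWdef
  have hHW : ∀ x : V, x ∈ W → x ≠ 0 → 0 < H x x := by
    intro x hxW hxne
    rcases (hHpsd x).lt_or_eq with h | h
    · exact h
    · exfalso
      have hxN : x ∈ N := (hmemN x).2 (hker x h.symm)
      have hBxx : B x x = 0 := hxW x hxN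
      exact hN0 x hxN hxne hBxx
  -- the bound on W
  obtain ⟨M, hMpos, hMb⟩ :=
    aux_bilin_bound (LinearMap.BilinForm.restrict H W) (LinearMap.BilinForm.restrict B W)
      (fun x y => by simpa using hHsymm x y)
      (fun x hx => by
        have hne : (x : V) ≠ 0 := fun h => hx (Subtype.ext h)
        simpa using hHW x x.2 hne)
  have hMb' : ∀ w : V, w ∈ W → |B w w| ≤ M * H w w := by
    intro w hw
    simpa using hMb ⟨w, hw⟩
  -- dichotomy of the sign of B on N
  have hdi : (∀ x : V, x ∈ N → x ≠ 0 → 0 < B x x) ∨ (∀ x : V, x ∈ N → x ≠ 0 → B x x < 0) := by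
    by_cases hp : ∀ x : V, x ∈ N → x ≠ 0 → 0 < B x x
    · exact Or.inl hp
    · right
      push_neg at hp
      obtain ⟨x₂, hx₂N, hx₂ne, hx₂⟩ := hp
      have hx₂neg : B x₂ x₂ < 0 := lt_of_le_of_ne hx₂ (hN0 x₂ hx₂N hx₂ne)
      intro y hyN hyne
      rcases (hN0 y hyN hyne).lt_or_gt with h | h
      · exact h
      · exfalso
        obtain ⟨t, t', hroot, _, _⟩ := aux_roots (B y y) (B y x₂) (B x₂ x₂) h hx₂neg
        set u := y + t • x₂ with hu
        have huN : u ∈ N := N.add_mem hyN (N.smul_mem t hx₂N)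
        have huB : B u u = 0 := by
          rw [hu, aux_expand B hBsymm y x₂ t]
          linarith [hroot]
        have hune : u ≠ 0 := by
          intro h0
          have hy : y = -(t • x₂) := eq_neg_of_add_eq_zero_left h0
          have hby : B y y = t ^ 2 * B x₂ x₂ := by
            rw [hy]
            simp only [map_neg, LinearMap.neg_apply, map_smul, LinearMap.smul_apply, smul_eq_mul]
            ring
          nlinarith [sq_nonneg t]
        exact hN0 u huN hune huB
  -- decomposition
  have hdec : ∀ v : V, ∃ n ∈ N, ∃ w ∈ W, n + w = v :=
    fun v => by
      obtain ⟨n, w, hn, hw, h⟩ := Submodule.codisjoint_iff_exists_add_eq.mp hcompl.codisjoint v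
      exact ⟨n, hn, w, hw, h⟩
  set δ : ℝ := 1 / (2 * M) with hδ
  have hδpos : 0 < δ := by rw [hδ]; positivity
  have hδM : δ * M = 1 / 2 := by
    rw [hδ]
    field_simp
  -- common facts for a decomposition
  have hsplit : ∀ v n w : V, n ∈ N → w ∈ W → n + w = v →
      H v v = H w w ∧ B v v = B n n + B w w := by
    intro v n w hnN hwW hvnw
    have hn0 : H n = 0 := (hmemN n).1 hnN
    have h1 : H n n = 0 := by rw [hn0]; simp
    have h2 : H n w = 0 := by rw [hn0]; simp
    have h3 : H w n = 0 := by rw [hHsymm w n, h2]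
    have hBnw : B n w = 0 := hwW n hnN
    have hBwn : B w n = 0 := by rw [hBsymm w n, hBnw]
    constructor
    · rw [← hvnw]
      simp only [map_add, LinearMap.add_apply, h1, h2, h3]
      ring
    · rw [← hvnw]
      simp only [map_add, LinearMap.add_apply, hBnw, hBwn]
      ring
  rcases hdi with hpos | hneg
  · -- B positive on N: use a := a₀ - δ
    refine ⟨a₀ - δ, fun v hvne => ?_⟩
    obtain ⟨n, hnN, w, hwW, hvnw⟩ := hdec v
    obtain ⟨eH, eB⟩ := hsplit v n w hnN hwW hvnw
    have hGv : G v v = H v v + a₀ * B v v := by rw [hHapp]; ring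
    have hHww : 0 ≤ H w w := hHpsd w
    have habs : δ * |B w w| ≤ δ * (M * H w w) :=
      mul_le_mul_of_nonneg_left (hMb' w hwW) hδpos.le
    have hBwlow : -(1 / 2) * H w w ≤ δ * B w w := by
      have h1 : -(|B w w|) ≤ B w w := neg_abs_le _
      have h2 : δ * (M * H w w) = 1 / 2 * H w w := by rw [← mul_assoc, hδM]
      nlinarith [habs, mul_le_mul_of_nonneg_left h1 hδpos.le]
    have hkey : 0 < H v v + δ * B v v := by
      rw [eH, eB]
      rcases eq_or_ne w 0 with rfl | hwne
      · have hn : n ≠ 0 := by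
          intro h0
          apply hvne
          rw [← hvnw, h0]
          simp
        have hBnn : 0 < B n n := hpos n hnN hn
        have hBww0 : B (0:V) (0:V) = 0 := by simp
        have hHww0 : H (0:V) (0:V) = 0 := by simp
        rw [hBww0, hHww0]
        have := mul_pos hδpos hBnn
        linarith
      · have hHwpos : 0 < H w w := hHW w hwW hwne
        have hBnn : 0 ≤ B n n := by
          rcases eq_or_ne n 0 with rfl | hnne
          · simp
          · exact (hpos n hnN hnne).le
        have := mul_nonneg hδpos.le hBnn
        nlinarith [hBwlow]
    have e : (a₀ - δ) * B v v = a₀ * B v v - δ * B v v := by ring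
    rw [e, hGv]
    linarith
  · -- B negative on N: use a := a₀ + δ
    refine ⟨a₀ + δ, fun v hvne => ?_⟩
    obtain ⟨n, hnN, w, hwW, hvnw⟩ := hdec v
    obtain ⟨eH, eB⟩ := hsplit v n w hnN hwW hvnw
    have hGv : G v v = H v v + a₀ * B v v := by rw [hHapp]; ring
    have hHww : 0 ≤ H w w := hHpsd w
    have habs : δ * |B w w| ≤ δ * (M * H w w) :=
      mul_le_mul_of_nonneg_left (hMb' w hwW) hδpos.le
    have hBwhigh : δ * B w w ≤ 1 / 2 * H w w := by
      have h1 : B w w ≤ |B w w| := le_abs_self _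
      have h2 : δ * (M * H w w) = 1 / 2 * H w w := by rw [← mul_assoc, hδM]
      nlinarith [habs, mul_le_mul_of_nonneg_left h1 hδpos.le]
    have hkey : 0 < H v v - δ * B v v := by
      rw [eH, eB]
      rcases eq_or_ne w 0 with rfl | hwne
      · have hn : n ≠ 0 := by
          intro h0
          apply hvne
          rw [← hvnw, h0]
          simp
        have hBnn : B n n < 0 := hneg n hnN hn
        have hBww0 : B (0:V) (0:V) = 0 := by simp
        have hHww0 : H (0:V) (0:V) = 0 := by simp
        rw [hBww0, hHww0]
        have := mul_pos hδpos (neg_pos.mpr hBnn)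
        nlinarith
      · have hHwpos : 0 < H w w := hHW w hwW hwne
        have hBnn : B n n ≤ 0 := by
          rcases eq_or_ne n 0 with rfl | hnne
          · simp
          · exact (hneg n hnN hnne).le
        have := mul_nonneg hδpos.le (neg_nonneg.mpr hBnn)
        nlinarith [hBwhigh]
    have e : (a₀ + δ) * B v v = a₀ * B v v + δ * B v v := by ring
    rw [e, hGv]
    linarith

/-- Remark 2.7: if the symmetric bilinear form `G` is non-negative on the zero cone of
the nondegenerate indefinite symmetric bilinear form `B`, then `G(v,v) ≥ a·B(v,v)` for
some real `a` and all `v`; if moreover `G` is positive on the nonzero vectors of the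
zero cone, then `G(v,v) > a·B(v,v)` for some real `a` and all nonzero `v`. -/
theorem stmt_2
    {V : Type*} [AddCommGroup V] [Module ℝ V] [FiniteDimensional ℝ V]
    (B : V →ₗ[ℝ] V →ₗ[ℝ] ℝ)
    (hBsymm : ∀ v w : V, B v w = B w v)
    (hBnd : ∀ v : V, (∀ w : V, B v w = 0) → v = 0)
    (hBindef : ∃ v w : V, 0 < B v v ∧ B w w < 0)
    (G : V →ₗ[ℝ] V →ₗ[ℝ] ℝ)
    (hGsymm : ∀ v w : V, G v w = G w v)
    (hG0 : ∀ v : V, B v v = 0 → 0 ≤ G v v) :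
    (∃ a : ℝ, ∀ v : V, a * B v v ≤ G v v) ∧
    ((∀ v : V, v ≠ 0 → B v v = 0 → 0 < G v v) →
      ∃ a : ℝ, ∀ v : V, v ≠ 0 → a * B v v < G v v) :=
  ⟨aux_part1 B G hBsymm hBindef hGsymm hG0,
   fun hstrict => aux_part2 B G hBsymm hBindef hGsymm hG0 hstrict⟩
end

section
/- (Proposition 2.4, item 3 / Remark 2.12, non-strict case.) An invertible J-separated linear operator L : V → V is J-monotone (i.e. J(Lv) ≥ J(v) for all v ∈ V) if and only if ρ−(L) ≤ 1 and ρ+(L) ≥ 1. -/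
/-- If a quadratic is positive on a right neighborhood of 0, its constant term is ≥ 0. -/
lemma aux_small (A C D ε : ℝ) (hε : 0 < ε)
    (h : ∀ t : ℝ, 0 < t → t < ε → 0 < A + C*t + D*t^2) : 0 ≤ A := by
  by_contra hA
  push_neg at hA
  set M : ℝ := |C| + |D| + 1 with hM
  have hM1 : 1 ≤ M := by nlinarith [abs_nonneg C, abs_nonneg D]
  have hMpos : 0 < M := by linarith
  set t : ℝ := min (ε/2) (min 1 (-A/(2*M))) with ht
  have htpos : 0 < t := by
    apply lt_min (by linarith)
    exact lt_min one_pos (div_pos (by linarith) (by linarith))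
  have ht1 : t ≤ 1 := le_trans (min_le_right _ _) (min_le_left _ _)
  have htA : t ≤ -A/(2*M) := le_trans (min_le_right _ _) (min_le_right _ _)
  have htε : t < ε := lt_of_le_of_lt (min_le_left _ _) (by linarith)
  have h1 := h t htpos htε
  have h2 : C*t ≤ (|C|) * t := by nlinarith [le_abs_self C]
  have htt : t^2 ≤ t := by nlinarith
  have h3 : D*t^2 ≤ (|D|) * t := by
    have h4 : D*t^2 ≤ (|D|) * t^2 := by nlinarith [le_abs_self D, sq_nonneg t]
    nlinarith [mul_nonneg (abs_nonneg D) (sub_nonneg.mpr htt)]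
  have h5 : M * t ≤ -A/2 := by
    have h7 := mul_le_mul_of_nonneg_left htA hMpos.le
    have heq : M * (-A/(2*M)) = -A/2 := by field_simp
    linarith
  have h6 : (|C|) * t + (|D|) * t ≤ M * t := by nlinarith
  linarith

/-- Scalar core of the key inequality: if every root `t` of the quadratic
`a²c + 2abt + at²` makes `a²c' + 2ab't + a't²` nonnegative, then `c'a ≤ a'c`. -/
lemma scalar_key (a b c a' b' c' : ℝ) (hu : a < 0) (hv : 0 < c)
    (H : ∀ t : ℝ, a^2*c + 2*a*t*b + t^2*a = 0 → 0 ≤ a^2*c' + 2*a*t*b' + t^2*a') :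
    c' * a ≤ a' * c := by
  set s : ℝ := Real.sqrt (b^2 - a*c) with hs
  have hdisc : 0 < b^2 - a*c := by nlinarith [sq_nonneg b]
  have hs2 : s^2 = b^2 - a*c := Real.sq_sqrt hdisc.le
  have hspos : 0 < s := Real.sqrt_pos.mpr hdisc
  have hf₁ := H (-b + s) (by linear_combination a * hs2)
  have hf₂ := H (-b - s) (by linear_combination a * hs2)
  have hτ₂neg : -b - s < 0 := by nlinarith
  have hτ₁pos : 0 < -b + s := by nlinarith
  have hid : (-b + s)*(a^2 * c' + 2*a*(-b - s) * b' + (-b - s)^2 * a')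
      - (-b - s)*(a^2 * c' + 2*a*(-b + s) * b' + (-b + s)^2 * a')
      = 2*s*a*(a*c' - a'*c) := by linear_combination (2*s*a') * hs2
  have h1 : 0 ≤ 2*s*a*(a*c' - a'*c) := by
    rw [← hid]
    have k1 := mul_nonneg hτ₁pos.le hf₂
    have k2 := mul_nonneg (neg_nonneg.mpr hτ₂neg.le) hf₁
    nlinarith
  have h2 : a*c' - a'*c ≤ 0 := by
    by_contra h3
    push_neg at h3
    have hsa : 2*s*a < 0 := by nlinarith
    nlinarith [mul_neg_of_neg_of_pos hsa h3]
  linarith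

section
variable {V : Type*} [AddCommGroup V] [Module ℝ V]

lemma expand (B : V →ₗ[ℝ] V →ₗ[ℝ] ℝ) (hBsymm : ∀ v w : V, B v w = B w v)
    (x y : V) (t : ℝ) :
    B (x + t • y) (x + t • y) = B x x + (2 * B x y) * t + (B y y) * t^2 := by
  simp [map_add, map_smul, hBsymm y x]
  ring

lemma expand2 (B : V →ₗ[ℝ] V →ₗ[ℝ] ℝ) (hBsymm : ∀ v w : V, B v w = B w v)
    (x y : V) (r t : ℝ) :
    B (r • x + t • y) (r • x + t • y)
      = r^2 * B x x + 2*r*t * B x y + t^2 * B y y := by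
  simp [map_add, map_smul, hBsymm y x]
  ring

/-- A nonzero null vector is mapped by a J-separated injective operator to a
vector with nonnegative J-value. -/
lemma null_nonneg (B : V →ₗ[ℝ] V →ₗ[ℝ] ℝ) (hBsymm : ∀ v w : V, B v w = B w v)
    (hBnd : ∀ v : V, (∀ w : V, B v w = 0) → v = 0)
    (L : V →ₗ[ℝ] V) (hLinj : Function.Injective L)
    (hsep : ∀ v : V, 0 < B v v → 0 < B (L v) (L v) ∨ L v = 0)
    (w : V) (hw : w ≠ 0) (hJw : B w w = 0) : 0 ≤ B (L w) (L w) := by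
  obtain ⟨z₀, hz₀⟩ : ∃ z, B w z ≠ 0 := by
    by_contra hc; push_neg at hc; exact hw (hBnd w hc)
  obtain ⟨z, hz⟩ : ∃ z, 0 < B w z := by
    rcases hz₀.lt_or_gt with h | h
    · exact ⟨-z₀, by simpa using by linarith⟩
    · exact ⟨z₀, h⟩
  set ε : ℝ := 2 * B w z / (|B z z| + 1) with hε
  have hεpos : 0 < ε := div_pos (by linarith) (by positivity)
  apply aux_small _ (2 * B (L w) (L z)) (B (L z) (L z)) ε hεpos
  intro t htpos htε
  have hwt : 0 < B (w + t • z) (w + t • z) := by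
    rw [expand B hBsymm w z t, hJw]
    have : -(2 * B w z) < B z z * t := by
      rcases le_or_gt 0 (B z z) with h | h
      · nlinarith
      · have : t * (|B z z| + 1) < 2 * B w z := by
          rw [hε, lt_div_iff₀ (by positivity)] at htε
          linarith
        rw [abs_of_neg h] at this
        nlinarith
    nlinarith
  have hwtne : L (w + t • z) ≠ 0 := by
    intro h0
    have : w + t • z = 0 := hLinj (by simpa using h0)
    rw [this] at hwt; simp at hwt
  rcases hsep _ hwt with h | h
  · rw [map_add, map_smul, expand B hBsymm (L w) (L z) t] at h
    exact h
  · exact absurd h hwtne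

/-- Key inequality (Wojtkowski): for a J-separated injective operator,
`J(Lv)·J(u) ≤ J(Lu)·J(v)` whenever `J(u) < 0 < J(v)`. -/
lemma key_ineq (B : V →ₗ[ℝ] V →ₗ[ℝ] ℝ) (hBsymm : ∀ v w : V, B v w = B w v)
    (hBnd : ∀ v : V, (∀ w : V, B v w = 0) → v = 0)
    (L : V →ₗ[ℝ] V) (hLinj : Function.Injective L)
    (hsep : ∀ v : V, 0 < B v v → 0 < B (L v) (L v) ∨ L v = 0)
    (u v : V) (hu : B u u < 0) (hv : 0 < B v v) :
    B (L v) (L v) * B u u ≤ B (L u) (L u) * B v v := by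
  apply scalar_key (B u u) (B v u) (B v v) _ _ _ hu hv
  intro t hroot
  have hnull : B ((B u u) • v + t • u) ((B u u) • v + t • u) = 0 := by
    rw [expand2 B hBsymm v u _ t]
    linear_combination hroot
  have hnz : (B u u) • v + t • u ≠ 0 := by
    intro h0
    have hveq : (B u u) • v = -(t • u) := by
      rw [eq_neg_iff_add_eq_zero]; exact h0
    have heq : (B u u)^2 * B v v = t^2 * B u u := by
      have h1 : B ((B u u) • v) ((B u u) • v) = B (-(t • u)) (-(t • u)) := by rw [hveq]
      simpa [map_smul, map_neg, pow_two, mul_assoc, mul_comm, mul_left_comm] using h1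
    have h2 : 0 < (B u u)^2 := by
      have := mul_pos_of_neg_of_neg hu hu
      nlinarith
    nlinarith [mul_pos h2 hv, mul_nonpos_of_nonneg_of_nonpos (sq_nonneg t) hu.le]
  have := null_nonneg B hBsymm hBnd L hLinj hsep _ hnz hnull
  rwa [map_add, map_smul, map_smul, expand2 B hBsymm (L v) (L u) _ t] at this

end

/-- Proposition 2.4, item 3 / Remark 2.12 (non-strict case): an invertible
J-separated operator `L` is J-monotone (`J(Lv) ≥ J(v)` for all `v`) if and only if
`ρ₋(L) = sup_{J(u)<0} J(Lu)/J(u) ≤ 1` and `ρ₊(L) = inf_{J(v)>0} J(Lv)/J(v) ≥ 1`. -/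
theorem stmt_5
    {V : Type*} [AddCommGroup V] [Module ℝ V] [FiniteDimensional ℝ V]
    (B : V →ₗ[ℝ] V →ₗ[ℝ] ℝ)
    (hBsymm : ∀ v w : V, B v w = B w v)
    (hBnd : ∀ v : V, (∀ w : V, B v w = 0) → v = 0)
    (hBindef : ∃ v w : V, 0 < B v v ∧ B w w < 0)
    (L : V →ₗ[ℝ] V)
    (hL : Function.Bijective L)
    (hsep : ∀ v : V, 0 < B v v → 0 < B (L v) (L v) ∨ L v = 0) :
    (∀ v : V, B v v ≤ B (L v) (L v)) ↔
      (sSup {x : ℝ | ∃ u : V, B u u < 0 ∧ x = B (L u) (L u) / B u u} ≤ 1 ∧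
       1 ≤ sInf {x : ℝ | ∃ v : V, 0 < B v v ∧ x = B (L v) (L v) / B v v}) := by
  obtain ⟨v₀, w₀, hv₀, hw₀⟩ := hBindef
  have hLinj : Function.Injective L := hL.1
  -- separation, strengthened
  have hsep' : ∀ v : V, 0 < B v v → 0 < B (L v) (L v) := by
    intro v hv
    rcases hsep v hv with h | h
    · exact h
    · exfalso
      have : v = 0 := hLinj (by simpa using h)
      rw [this] at hv; simp at hv
  constructor
  · intro hmono
    constructor
    · apply Real.sSup_le _ (by norm_num)
      rintro x ⟨u, hu, rfl⟩
      exact div_le_one_iff.mpr (Or.inr (Or.inr ⟨hu, hmono u⟩))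
    · refine le_csInf ⟨B (L v₀) (L v₀) / B v₀ v₀, v₀, hv₀, rfl⟩ ?_
      rintro x ⟨v, hv, rfl⟩
      exact (one_le_div hv).mpr (hmono v)
  · rintro ⟨hsup, hinf⟩ v
    rcases lt_trichotomy (B v v) 0 with hv | hv | hv
    · -- negative vectors: use boundedness of the sup set via key_ineq
      have hbdd : BddAbove {x : ℝ | ∃ u : V, B u u < 0 ∧ x = B (L u) (L u) / B u u} := by
        refine ⟨B (L v₀) (L v₀) / B v₀ v₀, ?_⟩
        rintro x ⟨u, hu, rfl⟩
        have hkey := key_ineq B hBsymm hBnd L hLinj hsep u v₀ hu hv₀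
        rw [div_le_iff_of_neg hu, div_mul_eq_mul_div, div_le_iff₀ hv₀]
        linarith
      have hx : B (L v) (L v) / B v v ≤ 1 := by
        refine le_trans (le_csSup hbdd ⟨v, hv, rfl⟩) hsup
      rw [div_le_one_iff] at hx
      rcases hx with ⟨h1, _⟩ | h1 | ⟨_, h1⟩
      · linarith
      · linarith
      · exact h1
    · -- null vectors
      rcases eq_or_ne v 0 with rfl | hvne
      · simp
      · rw [hv]
        exact null_nonneg B hBsymm hBnd L hLinj hsep v hvne hv
    · -- positive vectors
      have hbdd : BddBelow {x : ℝ | ∃ v : V, 0 < B v v ∧ x = B (L v) (L v) / B v v} := by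
        refine ⟨0, ?_⟩
        rintro x ⟨u, hu, rfl⟩
        exact le_of_lt (div_pos (hsep' u hu) hu)
      have hx : 1 ≤ B (L v) (L v) / B v v :=
        le_trans hinf (csInf_le hbdd ⟨v, hv, rfl⟩)
      exact (one_le_div hv).mp hx
end

section
/- (Proposition 2.4, item 3 / Remark 2.12, strict case.) An invertible strictly J-separated linear operator L : V → V is strictly J-monotone (i.e. J(Lv) > J(v) for all nonzero v ∈ V) if and only if ρ−(L) < 1 and ρ+(L) > 1. -/
private lemma cont_quad_s6 {W : Type*} [NormedAddCommGroup W] [NormedSpace ℝ W]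
    [FiniteDimensional ℝ W] (f : W →ₗ[ℝ] W →ₗ[ℝ] ℝ) :
    Continuous fun x => f x x := by
  let f' : W →ₗ[ℝ] (W →L[ℝ] ℝ) :=
    (LinearMap.toContinuousLinearMap : (W →ₗ[ℝ] ℝ) ≃ₗ[ℝ] (W →L[ℝ] ℝ)).toLinearMap.comp f
  have hf' : Continuous f' := f'.continuous_of_finiteDimensional
  have h : Continuous fun x : W => (f' x) x :=
    isBoundedBilinearMap_apply.continuous.comp (hf'.prodMk continuous_id)
  simpa [f'] using h

/-- Proposition 2.4, item 3 / Remark 2.12 (strict case): an invertible strictly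
J-separated operator `L` is strictly J-monotone (`J(Lv) > J(v)` for all nonzero `v`)
if and only if `ρ₋(L) = sup_{J(u)<0} J(Lu)/J(u) < 1` and
`ρ₊(L) = inf_{J(v)>0} J(Lv)/J(v) > 1`. -/
theorem stmt_6
    {V : Type*} [AddCommGroup V] [Module ℝ V] [FiniteDimensional ℝ V]
    (B : V →ₗ[ℝ] V →ₗ[ℝ] ℝ)
    (hBsymm : ∀ v w : V, B v w = B w v)
    (hBnd : ∀ v : V, (∀ w : V, B v w = 0) → v = 0)
    (hBindef : ∃ v w : V, 0 < B v v ∧ B w w < 0)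
    (L : V →ₗ[ℝ] V)
    (hL : Function.Bijective L)
    (hsep : ∀ v : V, v ≠ 0 → 0 ≤ B v v → 0 < B (L v) (L v)) :
    (∀ v : V, v ≠ 0 → B v v < B (L v) (L v)) ↔
      (sSup {x : ℝ | ∃ u : V, B u u < 0 ∧ x = B (L u) (L u) / B u u} < 1 ∧
       1 < sInf {x : ℝ | ∃ v : V, 0 < B v v ∧ x = B (L v) (L v) / B v v}) := by
  classical
  obtain ⟨v₀, w₀, hv₀, hw₀⟩ := hBindef
  have hz : ∀ u : V, B u u ≠ 0 → u ≠ 0 := by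
    intro u h hu; rw [hu] at h; simp at h
  have hSnegne : Set.Nonempty {x : ℝ | ∃ u : V, B u u < 0 ∧ x = B (L u) (L u) / B u u} :=
    ⟨_, w₀, hw₀, rfl⟩
  have hSposne : Set.Nonempty {x : ℝ | ∃ v : V, 0 < B v v ∧ x = B (L v) (L v) / B v v} :=
    ⟨_, v₀, hv₀, rfl⟩
  -- transfer to a normed space
  set W := Fin (Module.finrank ℝ V) → ℝ with hWdef
  let e : V ≃ₗ[ℝ] W := (Module.finBasis ℝ V).equivFun
  let f : W →ₗ[ℝ] W →ₗ[ℝ] ℝ := (B.comp e.symm.toLinearMap).compl₂ e.symm.toLinearMap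
  let BL : V →ₗ[ℝ] V →ₗ[ℝ] ℝ := (B.comp L).compl₂ L
  let g : W →ₗ[ℝ] W →ₗ[ℝ] ℝ := (BL.comp e.symm.toLinearMap).compl₂ e.symm.toLinearMap
  set F : W → ℝ := fun x => f x x with hFdef
  set G : W → ℝ := fun x => g x x with hGdef
  have hFa : ∀ x : W, F x = B (e.symm x) (e.symm x) := fun x => rfl
  have hGa : ∀ x : W, G x = B (L (e.symm x)) (L (e.symm x)) := fun x => rfl
  have hFcont : Continuous F := cont_quad_s6 f
  have hGcont : Continuous G := cont_quad_s6 g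
  have hsmF : ∀ (c : ℝ) (x : W), F (c • x) = c ^ 2 * F x := by
    intro c x
    show f (c • x) (c • x) = _
    simp only [map_smul, LinearMap.smul_apply, smul_eq_mul]
    ring
  have hsmG : ∀ (c : ℝ) (x : W), G (c • x) = c ^ 2 * G x := by
    intro c x
    show g (c • x) (c • x) = _
    simp only [map_smul, LinearMap.smul_apply, smul_eq_mul]
    ring
  have hFe : ∀ v : V, F (e v) = B v v := by
    intro v; rw [hFa]; simp
  have hGe : ∀ v : V, G (e v) = B (L v) (L v) := by
    intro v; rw [hGa]; simp
  -- normalization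
  have key : ∀ u : V, u ≠ 0 → ∃ y : W, ‖y‖ = 1 ∧ ∃ c : ℝ, 0 < c ∧
      F y = c * B u u ∧ G y = c * B (L u) (L u) := by
    intro u hu
    have heu : e u ≠ 0 := by simpa using hu
    have ht : (0 : ℝ) < ‖e u‖ := norm_pos_iff.mpr heu
    refine ⟨‖e u‖⁻¹ • e u, ?_, ‖e u‖⁻¹ ^ 2, by positivity, ?_, ?_⟩
    · rw [norm_smul, norm_inv, norm_norm, inv_mul_cancel₀ ht.ne']
    · rw [hsmF, hFe]
    · rw [hsmG, hGe]
  constructor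
  · -- forward direction
    intro hmono
    have hQpos : ∀ x : W, x ≠ 0 → 0 < G x - F x := by
      intro x hx
      have hx' : e.symm x ≠ 0 := by simpa using hx
      have := hmono (e.symm x) hx'
      rw [hFa, hGa]; linarith
    have hSpc : IsCompact (Metric.sphere (0 : W) 1) := isCompact_sphere 0 1
    have hSpne : (Metric.sphere (0 : W) 1).Nonempty := by
      obtain ⟨y, hy, _⟩ := key v₀ (hz v₀ hv₀.ne')
      exact ⟨y, by simpa [mem_sphere_zero_iff_norm] using hy⟩
    obtain ⟨xm, hxmSp, hxm⟩ :=
      hSpc.exists_isMinOn hSpne (hGcont.sub hFcont).continuousOn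
    obtain ⟨xM, hxMSp, hxM⟩ :=
      hSpc.exists_isMaxOn hSpne (continuous_abs.comp hFcont).continuousOn
    set c : ℝ := G xm - F xm with hcdef
    set C : ℝ := |F xM| with hCdef
    have hxm0 : xm ≠ 0 := by
      intro h; rw [h] at hxmSp; simp at hxmSp
    have hcpos : 0 < c := hQpos xm hxm0
    have hCpos : 0 < C := by
      obtain ⟨y, hy, cv, hcv, hFy, _⟩ := key v₀ (hz v₀ hv₀.ne')
      have hySp : y ∈ Metric.sphere (0 : W) 1 := by
        simpa [mem_sphere_zero_iff_norm] using hy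
      have h1 : |F y| ≤ C := hxM hySp
      have h2 : 0 < F y := by rw [hFy]; positivity
      calc (0 : ℝ) < F y := h2
        _ ≤ |F y| := le_abs_self _
        _ ≤ C := h1
    set δ : ℝ := c / C with hδdef
    have hδpos : 0 < δ := div_pos hcpos hCpos
    have hδC : δ * C = c := div_mul_cancel₀ _ hCpos.ne'
    constructor
    · have hle : sSup {x : ℝ | ∃ u : V, B u u < 0 ∧ x = B (L u) (L u) / B u u} ≤ 1 - δ := by
        apply csSup_le hSnegne
        rintro r ⟨u, hu, rfl⟩
        obtain ⟨y, hy, cu, hcu, hFy, hGy⟩ := key u (hz u hu.ne)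
        have hySp : y ∈ Metric.sphere (0 : W) 1 := by
          simpa [mem_sphere_zero_iff_norm] using hy
        have h1 : c ≤ G y - F y := hxm hySp
        have h2 : |F y| ≤ C := hxM hySp
        have hFyneg : F y < 0 := by rw [hFy]; exact mul_neg_of_pos_of_neg hcu hu
        have h3 : -F y ≤ C := by rw [← abs_of_neg hFyneg]; exact h2
        have hratio : B (L u) (L u) / B u u = G y / F y := by
          rw [hFy, hGy, mul_div_mul_left _ _ hcu.ne']
        rw [hratio, div_le_iff_of_neg hFyneg]
        nlinarith [mul_nonneg hδpos.le (show (0 : ℝ) ≤ C + F y by linarith)]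
      linarith
    · have hge : 1 + δ ≤ sInf {x : ℝ | ∃ v : V, 0 < B v v ∧ x = B (L v) (L v) / B v v} := by
        apply le_csInf hSposne
        rintro r ⟨v, hv, rfl⟩
        obtain ⟨y, hy, cv, hcv, hFy, hGy⟩ := key v (hz v hv.ne')
        have hySp : y ∈ Metric.sphere (0 : W) 1 := by
          simpa [mem_sphere_zero_iff_norm] using hy
        have h1 : c ≤ G y - F y := hxm hySp
        have h2 : |F y| ≤ C := hxM hySp
        have hFypos : 0 < F y := by rw [hFy]; exact mul_pos hcv hv
        have h3 : F y ≤ C := le_trans (le_abs_self _) h2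
        have hratio : B (L v) (L v) / B v v = G y / F y := by
          rw [hFy, hGy, mul_div_mul_left _ _ hcv.ne']
        rw [hratio, le_div_iff₀ hFypos]
        nlinarith [mul_nonneg hδpos.le (show (0 : ℝ) ≤ C - F y by linarith)]
      linarith
  · -- reverse direction
    rintro ⟨hsup, hinf⟩ v hv
    rcases lt_trichotomy (B v v) 0 with hneg | hzero | hpos
    · -- need BddAbove of the negative ratio set
      have hbdd : BddAbove {x : ℝ | ∃ u : V, B u u < 0 ∧ x = B (L u) (L u) / B u u} := by
        set K : Set W := Metric.sphere (0 : W) 1 ∩ {x | F x ≤ 0} with hKdef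
        have hKc : IsCompact K :=
          (isCompact_sphere 0 1).inter_right (isClosed_le hFcont continuous_const)
        set U : ℕ → Set W := fun M => {x | (M : ℝ) * F x < G x} with hUdef
        have hUopen : ∀ M, IsOpen (U M) :=
          fun M => isOpen_lt (continuous_const.mul hFcont) hGcont
        have hcover : K ⊆ ⋃ M, U M := by
          rintro x ⟨hxSp, hxF⟩
          have hx0 : x ≠ 0 := by
            intro h; rw [h] at hxSp; simp at hxSp
          rcases lt_or_eq_of_le (show F x ≤ 0 from hxF) with hlt | heq
          · obtain ⟨M, hM⟩ := exists_nat_gt (G x / F x)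
            exact Set.mem_iUnion.mpr ⟨M, (div_lt_iff_of_neg hlt).mp hM⟩
          · have hx' : e.symm x ≠ 0 := by simpa using hx0
            have hG : 0 < G x := by
              have h0 : (0 : ℝ) ≤ B (e.symm x) (e.symm x) := by
                rw [← hFa, ← heq]
              have := hsep (e.symm x) hx' h0
              rw [hGa]; exact this
            refine Set.mem_iUnion.mpr ⟨0, ?_⟩
            simp only [U, Set.mem_setOf_eq, Nat.cast_zero, zero_mul]
            exact hG
        obtain ⟨t, ht⟩ := hKc.elim_finite_subcover U hUopen hcover
        set M₁ : ℕ := t.sup id with hM₁def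
        have hbound : ∀ x ∈ K, (M₁ : ℝ) * F x < G x := by
          intro x hx
          obtain ⟨M, hMt, hMx⟩ := Set.mem_iUnion₂.mp (ht hx)
          have hMle : (M : ℝ) ≤ (M₁ : ℝ) := Nat.cast_le.mpr (Finset.le_sup (f := id) hMt)
          have hxF : F x ≤ 0 := hx.2
          calc (M₁ : ℝ) * F x ≤ (M : ℝ) * F x := mul_le_mul_of_nonpos_right hMle hxF
            _ < G x := hMx
        refine ⟨(M₁ : ℝ), ?_⟩
        rintro r ⟨u, hu, rfl⟩
        obtain ⟨y, hy, cu, hcu, hFy, hGy⟩ := key u (hz u hu.ne)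
        have hFyneg : F y < 0 := by rw [hFy]; exact mul_neg_of_pos_of_neg hcu hu
        have hyK : y ∈ K :=
          ⟨by simpa [mem_sphere_zero_iff_norm] using hy, hFyneg.le⟩
        have hb := hbound y hyK
        have hratio : B (L u) (L u) / B u u = G y / F y := by
          rw [hFy, hGy, mul_div_mul_left _ _ hcu.ne']
        rw [hratio, div_le_iff_of_neg hFyneg]
        exact hb.le
      have hmem : B (L v) (L v) / B v v ∈
          {x : ℝ | ∃ u : V, B u u < 0 ∧ x = B (L u) (L u) / B u u} := ⟨v, hneg, rfl⟩
      have h1 := le_csSup hbdd hmem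
      have h2 : B (L v) (L v) / B v v < 1 := lt_of_le_of_lt h1 hsup
      have := (div_lt_iff_of_neg hneg).mp h2
      linarith
    · have := hsep v hv (le_of_eq hzero.symm)
      linarith
    · have hmem : B (L v) (L v) / B v v ∈
          {x : ℝ | ∃ u : V, 0 < B u u ∧ x = B (L u) (L u) / B u u} := ⟨v, hpos, rfl⟩
      have hbb : BddBelow {x : ℝ | ∃ u : V, 0 < B u u ∧ x = B (L u) (L u) / B u u} := by
        refine ⟨0, ?_⟩
        rintro r ⟨u, hu, rfl⟩
        exact div_nonneg (hsep u (hz u hu.ne') hu.le).le hu.le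
      have h1 := csInf_le hbb hmem
      have h2 : 1 < B (L v) (L v) / B v v := lt_of_lt_of_le hinf h1
      rw [lt_div_iff₀ hpos] at h2
      linarith
end

section
/- (Proposition 2.10, supermultiplicativity of volume expansion.) If L1, L2 : V → V are invertible J-separated linear operators and 1 ≤ d ≤ p, then σ_d(L1 ∘ L2) ≥ σ_d(L1) · σ_d(L2). -/
/-- The maximal dimension `p` of a subspace of `V` on which the quadratic form
`J(v) = B v v` is positive definite. -/
noncomputable def posIndex {V : Type*} [AddCommGroup V] [Module ℝ V]
    (B : V →ₗ[ℝ] V →ₗ[ℝ] ℝ) : ℕ :=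
  sSup {k : ℕ | ∃ W : Submodule ℝ V, Module.finrank ℝ W = k ∧
    ∀ v ∈ W, v ≠ 0 → 0 < B v v}

/-- `σ_d(L)`: the infimum, over all `d`-dimensional subspaces `W` of `V` contained
(up to `0`) in the positive cone of `J`, of the rate of volume expansion
`α_d(L; W) = sqrt( det(B(Lwᵢ, Lwⱼ)) / det(B(wᵢ, wⱼ)) )` of `L` on `W`, computed with
respect to any basis `w₁, …, w_d` of `W` (the quotient of Gram determinants does not
depend on the choice of basis). -/
noncomputable def sigmaVol {V : Type*} [AddCommGroup V] [Module ℝ V]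
    (B : V →ₗ[ℝ] V →ₗ[ℝ] ℝ) (L : V →ₗ[ℝ] V) (d : ℕ) : ℝ :=
  sInf {x : ℝ | ∃ W : Submodule ℝ V, Module.finrank ℝ W = d ∧
    (∀ v ∈ W, v ≠ 0 → 0 < B v v) ∧
    ∃ b : Module.Basis (Fin d) ℝ W,
      x = Real.sqrt
        ((Matrix.of fun i j => B (L (b i : V)) (L (b j : V))).det /
         (Matrix.of fun i j => B (b i : V) (b j : V)).det)}

/-- The Gram matrix of a basis of a subspace contained (up to `0`) in the positive
cone of `B` is positive definite. -/
lemma gram_posdef {V : Type*} [AddCommGroup V] [Module ℝ V]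
    (B : V →ₗ[ℝ] V →ₗ[ℝ] ℝ) (hBsymm : ∀ v w : V, B v w = B w v)
    {d : ℕ} {W : Submodule ℝ V}
    (hpos : ∀ v ∈ W, v ≠ 0 → 0 < B v v) (b : Module.Basis (Fin d) ℝ W) :
    (Matrix.of fun i j => B (b i : V) (b j : V)).PosDef := by
  refine Matrix.posDef_iff_dotProduct_mulVec.mpr ⟨?_, ?_⟩
  · ext i j
    simp only [Matrix.conjTranspose_apply, Matrix.of_apply, star_trivial]
    exact hBsymm _ _
  · intro x hx
    set w : W := ∑ i, x i • b i with hw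
    have hwne : w ≠ 0 := by
      intro h
      apply hx
      funext i
      exact Fintype.linearIndependent_iff.mp b.linearIndependent x h i
    have key : dotProduct (star x) ((Matrix.of fun i j => B (b i : V) (b j : V)).mulVec x)
        = B (w : V) (w : V) := by
      have hcoe : (w : V) = ∑ i, x i • (b i : V) := by
        simp [hw]
      rw [hcoe]
      simp [dotProduct, Matrix.mulVec, map_sum, map_smul, Finset.mul_sum, smul_eq_mul]
      ring_nf
      apply Finset.sum_congr rfl
      intro i _
      apply Finset.sum_congr rfl
      intro j _
      rw [hBsymm (b j : V) (b i : V)]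
      ring
    rw [key]
    exact hpos _ w.2 (fun h => hwne (by exact_mod_cast Subtype.ext h))

/-- Proposition 2.10 (supermultiplicativity of volume expansion): if `L₁, L₂` are
invertible J-separated operators and `1 ≤ d ≤ p`, then
`σ_d(L₁ ∘ L₂) ≥ σ_d(L₁) · σ_d(L₂)`. -/
theorem stmt_7
    {V : Type*} [AddCommGroup V] [Module ℝ V] [FiniteDimensional ℝ V]
    (B : V →ₗ[ℝ] V →ₗ[ℝ] ℝ)
    (hBsymm : ∀ v w : V, B v w = B w v)
    (hBnd : ∀ v : V, (∀ w : V, B v w = 0) → v = 0)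
    (hBindef : ∃ v w : V, 0 < B v v ∧ B w w < 0)
    (L₁ L₂ : V →ₗ[ℝ] V)
    (hL₁ : Function.Bijective L₁)
    (hL₂ : Function.Bijective L₂)
    (hsep₁ : ∀ v : V, 0 < B v v → 0 < B (L₁ v) (L₁ v) ∨ L₁ v = 0)
    (hsep₂ : ∀ v : V, 0 < B v v → 0 < B (L₂ v) (L₂ v) ∨ L₂ v = 0)
    (d : ℕ) (hd1 : 1 ≤ d) (hdp : d ≤ posIndex B) :
    sigmaVol B L₁ d * sigmaVol B L₂ d ≤ sigmaVol B (L₁ ∘ₗ L₂) d := by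
  classical
  by_cases hW : ∃ W : Submodule ℝ V, Module.finrank ℝ W = d ∧ ∀ v ∈ W, v ≠ 0 → 0 < B v v
  · obtain ⟨W₀, hW₀r, hW₀p⟩ := hW
    have hnn : ∀ L : V →ₗ[ℝ] V, 0 ≤ sigmaVol B L d := by
      intro L
      apply Real.sInf_nonneg
      rintro x ⟨W, -, -, b, rfl⟩
      exact Real.sqrt_nonneg _
    have hbdd : ∀ L : V →ₗ[ℝ] V, BddBelow {x : ℝ | ∃ W : Submodule ℝ V,
        Module.finrank ℝ W = d ∧ (∀ v ∈ W, v ≠ 0 → 0 < B v v) ∧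
        ∃ b : Module.Basis (Fin d) ℝ W,
          x = Real.sqrt ((Matrix.of fun i j => B (L (b i : V)) (L (b j : V))).det /
            (Matrix.of fun i j => B (b i : V) (b j : V)).det)} := by
      intro L
      refine ⟨0, ?_⟩
      rintro x ⟨W, -, -, b, rfl⟩
      exact Real.sqrt_nonneg _
    rw [sigmaVol]
    apply le_csInf
    · exact ⟨_, W₀, hW₀r, hW₀p, Module.finBasisOfFinrankEq ℝ W₀ hW₀r, rfl⟩
    · rintro x ⟨W, hr, hp, b, rfl⟩
      have hgW := gram_posdef B hBsymm hp b
      have hinj : Function.Injective (L₂.submoduleMap W) := by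
        intro a b' h
        exact Subtype.ext (hL₂.1 (congrArg Subtype.val h))
      let e : W ≃ₗ[ℝ] W.map L₂ :=
        LinearEquiv.ofBijective (L₂.submoduleMap W) ⟨hinj, L₂.submoduleMap_surjective W⟩
      let b₂ : Module.Basis (Fin d) ℝ (W.map L₂) := b.map e
      have hb₂ : ∀ i, (b₂ i : V) = L₂ (b i : V) := fun i => rfl
      have hr₂ : Module.finrank ℝ (W.map L₂) = d := by
        rw [← hr]; exact (LinearEquiv.finrank_eq e).symm
      have hp₂ : ∀ v ∈ W.map L₂, v ≠ 0 → 0 < B v v := by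
        rintro v ⟨w, hwW, rfl⟩ hvne
        have hwne : w ≠ 0 := fun h => hvne (by rw [h, map_zero])
        rcases hsep₂ w (hp w hwW hwne) with h | h
        · exact h
        · exact absurd h hvne
      have hgW₂ := gram_posdef B hBsymm hp₂ b₂
      have hg : (0:ℝ) < (Matrix.of fun i j => B (b i : V) (b j : V)).det := hgW.det_pos
      have hc : (0:ℝ) < (Matrix.of fun i j => B (b₂ i : V) (b₂ j : V)).det := hgW₂.det_pos
      set g := (Matrix.of fun i j => B (b i : V) (b j : V)).det with hgdef
      set c := (Matrix.of fun i j => B (b₂ i : V) (b₂ j : V)).det with hcdef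
      set a := (Matrix.of fun i j => B ((L₁ ∘ₗ L₂) (b i : V)) ((L₁ ∘ₗ L₂) (b j : V))).det
        with hadef
      have hceq : (Matrix.of fun i j => B (L₂ (b i : V)) (L₂ (b j : V))).det = c := by
        rw [hcdef]
        congr 1
      have haeq : (Matrix.of fun i j => B (L₁ (b₂ i : V)) (L₁ (b₂ j : V))).det = a := by
        rw [hadef]
        congr 1
      have h1 : sigmaVol B L₁ d ≤ Real.sqrt (a / c) := by
        apply csInf_le (hbdd L₁)
        exact ⟨W.map L₂, hr₂, hp₂, b₂, by rw [haeq]⟩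
      have h2 : sigmaVol B L₂ d ≤ Real.sqrt (c / g) := by
        apply csInf_le (hbdd L₂)
        exact ⟨W, hr, hp, b, by rw [hceq]⟩
      calc sigmaVol B L₁ d * sigmaVol B L₂ d
          ≤ Real.sqrt (a / c) * Real.sqrt (c / g) :=
            mul_le_mul h1 h2 (hnn L₂) (Real.sqrt_nonneg _)
        _ = Real.sqrt (a / g) := by
            rw [← Real.sqrt_mul' _ (le_of_lt (div_pos hc hg))]
            congr 1
            field_simp
  · have he : ∀ L : V →ₗ[ℝ] V, sigmaVol B L d = 0 := by
      intro L
      rw [sigmaVol]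
      convert Real.sInf_empty
      ext x
      simp only [Set.mem_setOf_eq, Set.mem_empty_iff_false, iff_false]
      rintro ⟨W, h1, h2, -⟩
      exact hW ⟨W, h1, h2⟩
    rw [he, he, he]
    norm_num
end

section
/- (Lemma 4.2: the flow direction lies in the non-contracted subbundle.) Let X : ℝⁿ → ℝⁿ be a C¹ vector field, and let φ : ℝ × ℝⁿ → ℝⁿ be a C¹ complete flow generated by X, i.e. φ(0, x) = x, φ(s + t, x) = φ(s, φ(t, x)) for all s, t ∈ ℝ, and (d/dt) φ(t, x) = X(φ(t, x)) for all t, x. Let Λ ⊆ ℝⁿ be a compact set invariant under the flow (φ(t, ·)(Λ) = Λ for all t ∈ ℝ). Suppose π : Λ → L(ℝⁿ, ℝⁿ) is a continuous family of linear projections (π(x) ∘ π(x) = π(x) for all x ∈ Λ) defining a splitting E(x) = range π(x), F(x) = ker π(x), which is invariant under the derivative of the flow: Dφ_t(x) ∘ π(x) = π(φ(t, x)) ∘ Dφ_t(x) for all x ∈ Λ and t ∈ ℝ, where Dφ_t(x) denotes the derivative of the map φ(t, ·) at x. Assume further that E is uniformly contracted: there exist constants K > 0 and λ > 0 such that ‖Dφ_t(x)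 v‖ ≤ K e^{−λ t} ‖v‖ for all x ∈ Λ, all v ∈ E(x) and all t ≥ 0. Then X(x) ∈ F(x), i.e. π(x)(X(x)) = 0, for every x ∈ Λ. -/
/-- Lemma 4.2 (the flow direction lies in the non-contracted subbundle): let `φ` be a
C¹ complete flow on ℝⁿ generated by a C¹ vector field `X`, `Λ` a compact invariant
set, and `P : Λ → L(ℝⁿ, ℝⁿ)` a continuous family of projections defining a
`Dφ`-invariant splitting `E(x) = range P(x)`, `F(x) = ker P(x)` in which `E` is
uniformly contracted. Then `X(x) ∈ F(x)`, i.e. `P(x)(X(x)) = 0`, for all `x ∈ Λ`. -/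
theorem stmt_12
    {n : ℕ}
    (X : EuclideanSpace ℝ (Fin n) → EuclideanSpace ℝ (Fin n))
    (hX : ContDiff ℝ 1 X)
    (φ : ℝ → EuclideanSpace ℝ (Fin n) → EuclideanSpace ℝ (Fin n))
    (hφC1 : ContDiff ℝ 1 (fun p : ℝ × EuclideanSpace ℝ (Fin n) => φ p.1 p.2))
    (Dφ : ℝ → EuclideanSpace ℝ (Fin n) →
      (EuclideanSpace ℝ (Fin n) →L[ℝ] EuclideanSpace ℝ (Fin n)))
    (hφ0 : ∀ x, φ 0 x = x)
    (hφadd : ∀ s t : ℝ, ∀ x, φ (s + t) x = φ s (φ t x))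
    (hφX : ∀ (t : ℝ) (x : EuclideanSpace ℝ (Fin n)),
      HasDerivAt (fun s : ℝ => φ s x) (X (φ t x)) t)
    (hDφ : ∀ (t : ℝ) (x : EuclideanSpace ℝ (Fin n)), HasFDerivAt (φ t) (Dφ t x) x)
    (Λ : Set (EuclideanSpace ℝ (Fin n)))
    (hΛcomp : IsCompact Λ)
    (hΛinv : ∀ t : ℝ, φ t '' Λ = Λ)
    (P : EuclideanSpace ℝ (Fin n) →
      (EuclideanSpace ℝ (Fin n) →L[ℝ] EuclideanSpace ℝ (Fin n)))
    (hPcont : ContinuousOn P Λ)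
    (hPproj : ∀ x ∈ Λ, (P x).comp (P x) = P x)
    (hPinv : ∀ x ∈ Λ, ∀ t : ℝ, (Dφ t x).comp (P x) = (P (φ t x)).comp (Dφ t x))
    (K lam : ℝ) (hK : 0 < K) (hlam : 0 < lam)
    (hcontr : ∀ x ∈ Λ, ∀ v ∈ Set.range (P x), ∀ t : ℝ, 0 ≤ t →
      ‖Dφ t x v‖ ≤ K * Real.exp (-lam * t) * ‖v‖) :
    ∀ x ∈ Λ, P x (X x) = 0 := by
  -- Key identity: Dφ t y (X y) = X (φ t y)
  have hkey : ∀ (t : ℝ) (y : EuclideanSpace ℝ (Fin n)), Dφ t y (X y) = X (φ t y) := by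
    intro t y
    have h1 : HasDerivAt (fun s : ℝ => φ s (φ t y)) (X (φ t y)) 0 := by
      have := hφX 0 (φ t y)
      rwa [hφ0] at this
    have hd : HasDerivAt (fun s : ℝ => φ s y) (X y) 0 := by
      have := hφX 0 y
      rwa [hφ0] at this
    have h2 : HasDerivAt (fun s : ℝ => φ t (φ s y)) (Dφ t y (X y)) 0 := by
      have hF : HasFDerivAt (φ t) (Dφ t y) (φ 0 y) := by rw [hφ0]; exact hDφ t y
      exact hF.comp_hasDerivAt 0 hd
    have heq : (fun s : ℝ => φ s (φ t y)) = (fun s : ℝ => φ t (φ s y)) := by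
      funext s
      rw [← hφadd s t y, add_comm, hφadd t s y]
    rw [heq] at h1
    exact h2.unique h1
  -- Bound M for ‖P y (X y)‖ on Λ
  have hcont : ContinuousOn (fun y => P y (X y)) Λ :=
    hPcont.clm_apply (hX.continuous.continuousOn)
  obtain ⟨C, hC⟩ := hΛcomp.exists_bound_of_continuousOn hcont
  intro x hx
  have hC0 : 0 ≤ C := le_trans (norm_nonneg _) (hC x hx)
  -- For each t ≥ 0, find a preimage y
  have hbound : ∀ t : ℝ, 0 ≤ t → ‖P x (X x)‖ ≤ K * C * Real.exp (-lam * t) := by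
    intro t ht
    have hxmem : x ∈ φ t '' Λ := by rw [hΛinv t]; exact hx
    obtain ⟨y, hy, hyx⟩ := hxmem
    have hPXx : P x (X x) = Dφ t y (P y (X y)) := by
      have h1 : (Dφ t y).comp (P y) = (P (φ t y)).comp (Dφ t y) := hPinv y hy t
      have h2 : Dφ t y (P y (X y)) = P (φ t y) (Dφ t y (X y)) := by
        have := congrArg (fun L => L (X y)) h1
        simpa using this
      rw [h2, hkey t y, hyx]
    have hmem : P y (X y) ∈ Set.range (P y) := ⟨X y, rfl⟩
    have := hcontr y hy _ hmem t ht
    rw [hPXx]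
    calc ‖Dφ t y (P y (X y))‖ ≤ K * Real.exp (-lam * t) * ‖P y (X y)‖ := this
      _ ≤ K * Real.exp (-lam * t) * C := by
          apply mul_le_mul_of_nonneg_left (hC y hy)
          positivity
      _ = K * C * Real.exp (-lam * t) := by ring
  -- RHS tends to 0 as t → ∞
  have htend : Filter.Tendsto (fun t : ℝ => K * C * Real.exp (-lam * t))
      Filter.atTop (nhds 0) := by
    rw [show (0 : ℝ) = K * C * 0 by ring]
    apply Filter.Tendsto.const_mul
    apply Real.tendsto_exp_atBot.comp
    exact Filter.Tendsto.const_mul_atTop_of_neg (neg_neg_iff_pos.mpr hlam) Filter.tendsto_id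
  have hle : ‖P x (X x)‖ ≤ 0 := by
    apply ge_of_tendsto htend
    filter_upwards [Filter.eventually_ge_atTop 0] with t ht
    exact hbound t ht
  exact norm_le_zero_iff.mp hle
end
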